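/- arXiv:2110.05946 — 2 statements merged into one kernel-verified Lean document; each statement's English description precedes it below -/
import Mathlib

section
/- Let G be a connected leafless graph of Betti number g (g ≥ 0 arbitrary) and let x be a vertex of G. Then #Aut(G)_x ≤ 2^g · g!, where Aut(G)_x is the subgroup of automorphisms fixing the vertex x. -/
/-- A finite undirected multigraph (allowing loops and multiple edges) on a vertex type `V`
and an edge type `E`: the map `ends` assigns to each edge its unordered pair of endpoints
(a loop is an edge whose two endpoints coincide).  This is the same data as an incidence
map `ε : E → 2^V` taking values in subsets of cardinality 1 or 2. -/
structure Multigraph (V E : Type) where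
  ends : E → Sym2 V

namespace Multigraph

variable {V E : Type} (G : Multigraph V E)

/-- An automorphism of a multigraph: a pair of bijections on vertices and edges
commuting with the incidence map. -/
structure Aut (G : Multigraph V E) where
  toV : Equiv.Perm V
  toE : Equiv.Perm E
  ends_map : ∀ e, G.ends (toE e) = Sym2.map toV (G.ends e)

/-- Degree of the vertex `v` with respect to the edge set `F` (loops counted twice):
the number of edges of `F` incident to `v`, plus the number of loops of `F` at `v`. -/
noncomputable def degIn (F : Set E) (v : V) : ℕ :=
  {e ∈ F | v ∈ G.ends e}.ncard + {e ∈ F | G.ends e = s(v, v)}.ncard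

/-- Degree of a vertex (loops counted twice). -/
noncomputable def degree (v : V) : ℕ := G.degIn Set.univ v

/-- A graph is leafless if every vertex has degree at least two. -/
def Leafless : Prop := ∀ v, 2 ≤ G.degree v

/-- Adjacency: there is an edge with endpoints `u`, `v`. -/
def Adj (u v : V) : Prop := ∃ e, G.ends e = s(u, v)

/-- A graph is connected if it is nonempty and every two vertices are joined by a walk. -/
def Connected : Prop := Nonempty V ∧ ∀ u v : V, Relation.ReflTransGen G.Adj u v

/-- Adjacency using only edges outside the edge set `F`. -/
def AdjOff (F : Set E) (u v : V) : Prop := ∃ e, e ∉ F ∧ G.ends e = s(u, v)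

/-- Adjacency in the subgraph `G ∖ {x}` obtained by deleting the vertex `x`
and all edges incident to it. -/
def AdjOffV (x : V) (u v : V) : Prop := u ≠ x ∧ v ≠ x ∧ G.Adj u v

/-- An edge is a bridge if its endpoints are not joined by a walk avoiding it;
equivalently, its deletion increases the number of connected components. -/
def IsBridge (e : E) : Prop :=
  ∃ u v, G.ends e = s(u, v) ∧ ¬ Relation.ReflTransGen (G.AdjOff {e}) u v

end Multigraph
set_option maxHeartbeats 1000000

attribute [local instance] Classical.propDecidable

noncomputable section

namespace Multigraph

variable {V E : Type} {G : Multigraph V E}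

theorem Aut.ext' {f h : G.Aut} (h1 : f.toV = h.toV) (h2 : f.toE = h.toE) : f = h := by
  cases f; cases h; simp_all

instance [Finite V] [Finite E] : Finite G.Aut :=
  Finite.of_injective (fun f => (f.toV, f.toE)) (by
    intro f h hfh
    exact Aut.ext' (congrArg Prod.fst hfh) (congrArg Prod.snd hfh))

/-- helper: map of an Equiv and its symm on Sym2 -/
theorem Sym2.map_symm_map (f : Equiv.Perm V) (z : Sym2 V) :
    Sym2.map f.symm (Sym2.map f z) = z := by
  rw [Sym2.map_map]
  have : (⇑f.symm ∘ ⇑f) = id := by funext v; simp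
  rw [this]
  simp

def Aut.idAut (G : Multigraph V E) : G.Aut :=
  ⟨Equiv.refl V, Equiv.refl E, fun e => by simp⟩

instance : Nonempty G.Aut := ⟨Aut.idAut G⟩

def Aut.comp (f h : G.Aut) : G.Aut where
  toV := h.toV.trans f.toV
  toE := h.toE.trans f.toE
  ends_map := by
    intro e
    simp only [Equiv.trans_apply]
    rw [f.ends_map, h.ends_map, Sym2.map_map]
    rfl

def Aut.inv (f : G.Aut) : G.Aut where
  toV := f.toV.symm
  toE := f.toE.symm
  ends_map := by
    intro e
    have := f.ends_map (f.toE.symm e)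
    simp only [Equiv.apply_symm_apply] at this
    rw [this, Sym2.map_symm_map]

@[simp] theorem Aut.comp_toV (f h : G.Aut) (v : V) : (f.comp h).toV v = f.toV (h.toV v) := rfl
@[simp] theorem Aut.comp_toE (f h : G.Aut) (e : E) : (f.comp h).toE e = f.toE (h.toE e) := rfl
@[simp] theorem Aut.inv_toV (f : G.Aut) (v : V) : f.inv.toV v = f.toV.symm v := rfl
@[simp] theorem Aut.inv_toE (f : G.Aut) (e : E) : f.inv.toE e = f.toE.symm e := rfl

theorem Aut.comp_left_cancel {h f f' : G.Aut} (hh : h.comp f = h.comp f') : f = f' := by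
  apply Aut.ext'
  · have := congrArg Aut.toV hh
    ext v
    have := congrArg (fun (q : Equiv.Perm V) => h.toV.symm (q v)) this
    simpa using this
  · have := congrArg Aut.toE hh
    ext e
    have := congrArg (fun (q : Equiv.Perm E) => h.toE.symm (q e)) this
    simpa using this

theorem Aut.comp_right_cancel {h f f' : G.Aut} (hh : f.comp h = f'.comp h) : f = f' := by
  apply Aut.ext'
  · have := congrArg Aut.toV hh
    ext v
    have := congrArg (fun (q : Equiv.Perm V) => q (h.toV.symm v)) this
    simpa using this
  · have := congrArg Aut.toE hh
    ext e
    have := congrArg (fun (q : Equiv.Perm E) => q (h.toE.symm e)) this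
    simpa using this

/-! transport lemmas -/

theorem Aut.mem_ends (f : G.Aut) {v : V} {e : E} (h : v ∈ G.ends e) :
    f.toV v ∈ G.ends (f.toE e) := by
  rw [f.ends_map, Sym2.mem_map]
  exact ⟨v, h, rfl⟩

theorem Aut.ends_eq (f : G.Aut) {u w : V} {e : E} (h : G.ends e = s(u, w)) :
    G.ends (f.toE e) = s(f.toV u, f.toV w) := by
  rw [f.ends_map, h, Sym2.map_pair_eq]

theorem Aut.adjOff (f : G.Aut) {e₀ : E} {u w : V} (h : G.AdjOff {e₀} u w) :
    G.AdjOff {f.toE e₀} (f.toV u) (f.toV w) := by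
  obtain ⟨e, he, hends⟩ := h
  refine ⟨f.toE e, fun hc => he ?_, f.ends_eq hends⟩
  have : e = e₀ := f.toE.injective (by simpa using hc)
  simp [this]

theorem Aut.reachOff (f : G.Aut) {e₀ : E} {u w : V}
    (h : Relation.ReflTransGen (G.AdjOff {e₀}) u w) :
    Relation.ReflTransGen (G.AdjOff {f.toE e₀}) (f.toV u) (f.toV w) :=
  Relation.ReflTransGen.lift f.toV (fun _ _ hr => f.adjOff hr) _ _ h

theorem Aut.isBridge (f : G.Aut) {e : E} (h : G.IsBridge e) : G.IsBridge (f.toE e) := by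
  obtain ⟨u, w, hends, hno⟩ := h
  refine ⟨f.toV u, f.toV w, f.ends_eq hends, fun hreach => hno ?_⟩
  have := f.inv.reachOff (e₀ := f.toE e) hreach
  simpa using this

theorem Aut.isBridge_iff (f : G.Aut) {e : E} : G.IsBridge (f.toE e) ↔ G.IsBridge e := by
  constructor
  · intro h
    have := f.inv.isBridge h
    simpa using this
  · exact f.isBridge

end Multigraph
namespace Multigraph

variable {V E : Type}

theorem _root_.Sym2.exists_eq (z : Sym2 V) : ∃ a b, z = s(a, b) := by
  induction z using Sym2.ind with | _ a b => exact ⟨a, b, rfl⟩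

theorem ncard_sep [Fintype E] (F : Set E) (P : E → Prop) [DecidablePred P]
    [Fintype F] :
    {e ∈ F | P e}.ncard = (F.toFinset.filter P).card := by
  classical
  rw [Set.ncard_eq_toFinset_card']
  congr 1
  ext e
  simp

theorem handshake [Fintype V] [Fintype E] (G : Multigraph V E) (F : Set E) (W : Set V)
    (hcl : ∀ e ∈ F, ∀ v ∈ G.ends e, v ∈ W) :
    ∑ v ∈ W.toFinset, G.degIn F v = 2 * F.ncard := by
  classical
  have hstep : ∀ v, G.degIn F v =
      ∑ e ∈ F.toFinset, ((if v ∈ G.ends e then 1 else 0) + (if G.ends e = s(v, v) then 1 else 0)) := by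
    intro v
    rw [degIn, ncard_sep, ncard_sep, Finset.card_filter, Finset.card_filter, ← Finset.sum_add_distrib]
  calc ∑ v ∈ W.toFinset, G.degIn F v
      = ∑ v ∈ W.toFinset, ∑ e ∈ F.toFinset,
          ((if v ∈ G.ends e then 1 else 0) + (if G.ends e = s(v, v) then 1 else 0)) := by
        exact Finset.sum_congr rfl (fun v _ => hstep v)
    _ = ∑ e ∈ F.toFinset, ∑ v ∈ W.toFinset,
          ((if v ∈ G.ends e then 1 else 0) + (if G.ends e = s(v, v) then 1 else 0)) :=
        Finset.sum_comm
    _ = ∑ _e ∈ F.toFinset, 2 := by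
        refine Finset.sum_congr rfl (fun e he => ?_)
        have heF : e ∈ F := by simpa using he
        obtain ⟨a, b, hab⟩ := Sym2.exists_eq (G.ends e)
        have haW : a ∈ W.toFinset := by
          simp only [Set.mem_toFinset]
          exact hcl e heF a (by rw [hab]; exact Sym2.mem_mk_left a b)
        have hbW : b ∈ W.toFinset := by
          simp only [Set.mem_toFinset]
          exact hcl e heF b (by rw [hab]; exact Sym2.mem_mk_right a b)
        by_cases hab' : a = b
        · subst hab'
          have hpt : ∀ v ∈ W.toFinset, ((if v ∈ G.ends e then (1:ℕ) else 0) +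
              (if G.ends e = s(v, v) then 1 else 0)) = (if v = a then 2 else 0) := by
            intro v _
            by_cases hv : v = a
            · subst hv; simp [hab]
            · have hm : ¬ (v ∈ G.ends e) := by
                rw [hab]; simp [Sym2.mem_iff, hv]
              have hl : ¬ (G.ends e = s(v, v)) := by
                rw [hab, Sym2.eq_iff]
                push_neg
                exact ⟨fun h _ => absurd h.symm hv, fun h _ => absurd h.symm hv⟩
              simp [hm, hl, hv]
          rw [Finset.sum_congr rfl hpt, Finset.sum_ite_eq' W.toFinset a (fun _ => 2)]
          simp [haW]
        · have hpt : ∀ v ∈ W.toFinset, ((if v ∈ G.ends e then (1:ℕ) else 0) +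
              (if G.ends e = s(v, v) then 1 else 0)) =
              ((if v = a then 1 else 0) + (if v = b then 1 else 0)) := by
            intro v _
            have hl : ¬ (G.ends e = s(v, v)) := by
              rw [hab, Sym2.eq_iff]
              push_neg
              exact ⟨fun h1 h2 => absurd (h1.trans h2.symm) hab',
                fun h1 h2 => absurd (h1.trans h2.symm) hab'⟩
            have hm : (v ∈ G.ends e) ↔ (v = a ∨ v = b) := by
              rw [hab]; exact Sym2.mem_iff
            rw [if_neg hl, add_zero]
            by_cases hva : v = a
            · subst hva
              have : ¬ v = b := hab'
              simp [hm, this]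
            · by_cases hvb : v = b
              · subst hvb; simp [hm, hva]
              · simp [hm, hva, hvb]
          rw [Finset.sum_congr rfl hpt, Finset.sum_add_distrib,
            Finset.sum_ite_eq' W.toFinset a (fun _ => 1),
            Finset.sum_ite_eq' W.toFinset b (fun _ => 1)]
          simp [haW, hbW]
    _ = 2 * F.ncard := by
        rw [Finset.sum_const, Set.ncard_eq_toFinset_card']
        ring
  
theorem sum_degree [Fintype V] [Fintype E] (G : Multigraph V E) :
    ∑ v : V, G.degree v = 2 * Fintype.card E := by
  classical
  have := G.handshake Set.univ Set.univ (by intros; trivial)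
  simpa [degree, Set.ncard_univ, Nat.card_eq_fintype_card] using this

theorem ncard_incident_le_degree [Fintype E] (G : Multigraph V E) (x : V) :
    {e | x ∈ G.ends e}.ncard ≤ G.degree x := by
  rw [degree, degIn, Set.sep_univ]
  exact Nat.le_add_right _ _

theorem degree_root_le [Fintype V] [Fintype E] (G : Multigraph V E) (x : V)
    (hdeg : ∀ v, v ≠ x → 2 ≤ G.degree v) :
    G.degree x + 2 * (Fintype.card V - 1) ≤ 2 * Fintype.card E := by
  classical
  rw [← G.sum_degree]
  rw [← Finset.sum_erase_add Finset.univ _ (Finset.mem_univ x), add_comm]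
  have h1 : 2 * (Fintype.card V - 1) ≤ ∑ v ∈ Finset.univ.erase x, G.degree v := by
    have hc : (Finset.univ.erase x).card = Fintype.card V - 1 := by
      rw [Finset.card_erase_of_mem (Finset.mem_univ x), Finset.card_univ]
    calc 2 * (Fintype.card V - 1) = (Finset.univ.erase x).card • 2 := by
          rw [hc]; rw [smul_eq_mul]; ring
      _ ≤ ∑ v ∈ Finset.univ.erase x, G.degree v := by
          apply Finset.card_nsmul_le_sum
          intro v hv
          exact hdeg v (Finset.ne_of_mem_erase hv)
  omega

end Multigraph
namespace Multigraph

variable {V E : Type} {G : Multigraph V E}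

theorem adjOff_symm {F : Set E} {u v : V} (h : G.AdjOff F u v) : G.AdjOff F v u := by
  obtain ⟨e, he, hends⟩ := h
  exact ⟨e, he, by rw [hends, Sym2.eq_swap]⟩

theorem reachOff_symm {F : Set E} {u v : V}
    (h : Relation.ReflTransGen (G.AdjOff F) u v) :
    Relation.ReflTransGen (G.AdjOff F) v u :=
  haveI : Std.Symm (G.AdjOff F) := ⟨fun _ _ hr => adjOff_symm hr⟩; Std.Symm.symm _ _ h

theorem not_isBridge_reach {e : E} (hnb : ¬ G.IsBridge e) :
    ∀ u v, G.ends e = s(u, v) → Relation.ReflTransGen (G.AdjOff {e}) u v := by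
  intro u v huv
  by_contra hc
  exact hnb ⟨u, v, huv, hc⟩

theorem reachOff_of_reach {e : E} (hnb : ¬ G.IsBridge e) {u v : V}
    (h : Relation.ReflTransGen G.Adj u v) :
    Relation.ReflTransGen (G.AdjOff {e}) u v := by
  induction h with
  | refl => exact Relation.ReflTransGen.refl
  | tail _ hstep ih =>
      rename_i b c _
      obtain ⟨e', hends⟩ := hstep
      by_cases he' : e' = e
      · subst he'
        exact ih.trans (not_isBridge_reach hnb b c hends)
      · exact ih.tail ⟨e', by simpa using he', hends⟩

/-! ### Deletion of an edge -/

def delete (G : Multigraph V E) (e : E) : Multigraph V {e' // e' ≠ e} :=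
  ⟨fun e' => G.ends e'.val⟩

theorem delete_adj {e : E} {u v : V} : (G.delete e).Adj u v ↔ G.AdjOff {e} u v := by
  constructor
  · rintro ⟨⟨e', he'⟩, hends⟩
    exact ⟨e', by simpa using he', hends⟩
  · rintro ⟨e', he', hends⟩
    exact ⟨⟨e', by simpa using he'⟩, hends⟩

theorem delete_connected {e : E} (hconn : G.Connected) (hnb : ¬ G.IsBridge e) :
    (G.delete e).Connected := by
  refine ⟨hconn.1, fun u v => ?_⟩
  have := reachOff_of_reach hnb (hconn.2 u v)
  exact Relation.ReflTransGen.mono (fun _ _ h => delete_adj.2 h) _ _ this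

theorem card_delete [Fintype E] (e : E) :
    Fintype.card {e' // e' ≠ e} + 1 = Fintype.card E := by
  classical
  have h1 : Fintype.card {e' // e' = e} = 1 := Fintype.card_subtype_eq e
  have h2 := Fintype.card_subtype_compl (fun e' => e' = e) (α := E)
  have h3 : Fintype.card {e' // e' ≠ e} = Fintype.card {e' : E // ¬ e' = e} :=
    Fintype.card_congr (Equiv.subtypeEquivRight (fun _ => Iff.rfl))
  have hle : 1 ≤ Fintype.card E := by
    have : Nonempty E := ⟨e⟩
    exact Fintype.card_pos
  omega

theorem ncard_subtype_eq {p : E → Prop} (P : E → Prop) :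
    {e' : {x // p x} | P e'.val}.ncard = {e : E | p e ∧ P e}.ncard := by
  rw [← Set.ncard_image_of_injective _ (Subtype.val_injective (p := p))]
  congr 1
  ext e
  simp only [Set.mem_image, Set.mem_setOf_eq]
  constructor
  · rintro ⟨⟨e', hp⟩, hP, rfl⟩; exact ⟨hp, hP⟩
  · rintro ⟨hp, hP⟩; exact ⟨⟨e, hp⟩, hP, rfl⟩

theorem delete_degree_expand {e : E} (v : V) :
    (G.delete e).degree v =
      {ee : E | ee ≠ e ∧ v ∈ G.ends ee}.ncard + {ee : E | ee ≠ e ∧ G.ends ee = s(v, v)}.ncard := by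
  rw [degree, degIn, Set.sep_univ, Set.sep_univ]
  change {e' : {x // x ≠ e} | v ∈ G.ends e'.val}.ncard
      + {e' : {x // x ≠ e} | G.ends e'.val = s(v, v)}.ncard = _
  rw [ncard_subtype_eq (p := fun e' => e' ≠ e) (fun ee => v ∈ G.ends ee),
    ncard_subtype_eq (p := fun e' => e' ≠ e) (fun ee => G.ends ee = s(v, v))]

theorem degree_expand (v : V) :
    G.degree v = {ee : E | v ∈ G.ends ee}.ncard + {ee : E | G.ends ee = s(v, v)}.ncard := by
  rw [degree, degIn, Set.sep_univ, Set.sep_univ]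

theorem delete_degree_of_not_mem {e : E} {v : V} (hv : v ∉ G.ends e) :
    (G.delete e).degree v = G.degree v := by
  rw [delete_degree_expand, degree_expand]
  congr 2
  · ext ee
    simp only [Set.mem_setOf_eq, and_iff_right_iff_imp]
    intro h rfl'
    exact hv (rfl' ▸ h)
  · ext ee
    simp only [Set.mem_setOf_eq, and_iff_right_iff_imp]
    intro h rfl'
    subst rfl'
    exact hv (by rw [h]; simp)

theorem degree_le_delete_add_one [Fintype E] {e : E} {v : V} (hnl : G.ends e ≠ s(v, v)) :
    G.degree v ≤ (G.delete e).degree v + 1 := by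
  classical
  rw [delete_degree_expand, degree_expand]
  have h1 : {ee : E | v ∈ G.ends ee}.ncard ≤ {ee : E | ee ≠ e ∧ v ∈ G.ends ee}.ncard + 1 := by
    have hsub : {ee : E | v ∈ G.ends ee} ⊆ insert e {ee : E | ee ≠ e ∧ v ∈ G.ends ee} := by
      intro ee hee
      by_cases h : ee = e
      · subst h; exact Set.mem_insert _ _
      · exact Set.mem_insert_of_mem _ ⟨h, hee⟩
    calc {ee : E | v ∈ G.ends ee}.ncard ≤ (insert e {ee : E | ee ≠ e ∧ v ∈ G.ends ee}).ncard :=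
          Set.ncard_le_ncard hsub (Set.toFinite _)
      _ ≤ _ := Set.ncard_insert_le _ _
  have h2 : {ee : E | G.ends ee = s(v, v)} = {ee : E | ee ≠ e ∧ G.ends ee = s(v, v)} := by
    ext ee
    simp only [Set.mem_setOf_eq, iff_and_self]
    rintro h rfl
    exact hnl h
  rw [h2]
  omega

theorem degree_le_delete_add_two [Fintype E] (e : E) (v : V) :
    G.degree v ≤ (G.delete e).degree v + 2 := by
  classical
  rw [delete_degree_expand, degree_expand]
  have key : ∀ P : E → Prop, {ee : E | P ee}.ncard ≤ {ee : E | ee ≠ e ∧ P ee}.ncard + 1 := by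
    intro P
    have hsub : {ee : E | P ee} ⊆ insert e {ee : E | ee ≠ e ∧ P ee} := by
      intro ee hee
      by_cases h : ee = e
      · subst h; exact Set.mem_insert _ _
      · exact Set.mem_insert_of_mem _ ⟨h, hee⟩
    calc {ee : E | P ee}.ncard ≤ (insert e {ee : E | ee ≠ e ∧ P ee}).ncard :=
          Set.ncard_le_ncard hsub (Set.toFinite _)
      _ ≤ _ := Set.ncard_insert_le _ _
  have := key (fun ee => v ∈ G.ends ee)
  have := key (fun ee => G.ends ee = s(v, v))
  omega

def Aut.deleteAut {e : E} (f : G.Aut) (hfe : f.toE e = e) : (G.delete e).Aut where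
  toV := f.toV
  toE := f.toE.subtypePerm (fun e' => Iff.symm <| by
    constructor
    · intro h hc
      exact h (f.toE.injective (hc.trans hfe.symm))
    · intro h hc
      exact h (by rw [hc, hfe]))
  ends_map := fun e' => f.ends_map e'.val

theorem deleteAut_inj {e : E} {x : V} :
    Function.Injective (fun (f : {f : G.Aut // f.toV x = x ∧ f.toE e = e}) =>
      (⟨(f.val.deleteAut f.prop.2), f.prop.1⟩ :
        {f' : (G.delete e).Aut // f'.toV x = x})) := by
  rintro ⟨f, hf⟩ ⟨h, hh⟩ heq
  simp only [Subtype.mk.injEq] at heq ⊢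
  apply Aut.ext'
  · exact congrArg (fun q : {f' : (G.delete e).Aut // f'.toV x = x} => q.1.toV) heq
  · ext ee
    by_cases hc : ee = e
    · rw [hc, hf.2, hh.2]
    · have := congrArg (fun (q : {f' : (G.delete e).Aut // f'.toV x = x}) => (q.1.toE ⟨ee, hc⟩).val) heq
      simpa [Aut.deleteAut, Equiv.Perm.subtypePerm] using this

end Multigraph
namespace Multigraph

variable {V E : Type} {G : Multigraph V E}

theorem adj_symm {u v : V} (h : G.Adj u v) : G.Adj v u := by
  obtain ⟨e, he⟩ := h
  exact ⟨e, by rw [he, Sym2.eq_swap]⟩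

theorem _root_.Sym2.map_congr' {α β : Type} {f g : α → β} {z : Sym2 α}
    (h : ∀ a ∈ z, f a = g a) : z.map f = z.map g := by
  induction z using Sym2.ind with
  | _ a b =>
    rw [Sym2.map_pair_eq, Sym2.map_pair_eq, h a (Sym2.mem_mk_left a b),
      h b (Sym2.mem_mk_right a b)]

/-! ### Restriction to a sub-multigraph -/

def toSub (pV : V → Prop) (d : {v // pV v}) : V → {v // pV v} :=
  fun v => if h : pV v then ⟨v, h⟩ else d

theorem toSub_of {pV : V → Prop} (d : {v // pV v}) {v : V} (h : pV v) :
    toSub pV d v = ⟨v, h⟩ := dif_pos h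

def restrict (G : Multigraph V E) (pV : V → Prop) (pE : E → Prop) (d : {v // pV v}) :
    Multigraph {v // pV v} {e // pE e} :=
  ⟨fun e' => (G.ends e'.val).map (toSub pV d)⟩

variable {pV : V → Prop} {pE : E → Prop} {d : {v // pV v}}
  (hcl : ∀ e, pE e → ∀ v ∈ G.ends e, pV v)

theorem restrict_ends (e' : {e // pE e}) :
    (G.restrict pV pE d).ends e' = (G.ends e'.val).map (toSub pV d) := rfl

include hcl

theorem mem_restrict {w : {v // pV v}} {e' : {e // pE e}} :
    w ∈ (G.restrict pV pE d).ends e' ↔ w.val ∈ G.ends e'.val := by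
  rw [restrict_ends, Sym2.mem_map]
  constructor
  · rintro ⟨a, ha, rfl⟩
    rw [toSub_of d (hcl e'.val e'.prop a ha)]
    exact ha
  · intro hw
    exact ⟨w.val, hw, by rw [toSub_of d (hcl e'.val e'.prop _ hw)]⟩

theorem restrict_loop {w : {v // pV v}} {e' : {e // pE e}} :
    (G.restrict pV pE d).ends e' = s(w, w) ↔ G.ends e'.val = s(w.val, w.val) := by
  rw [restrict_ends]
  obtain ⟨a, b, hab⟩ := Sym2.exists_eq (G.ends e'.val)
  have hpa : pV a := hcl e'.val e'.prop a (by rw [hab]; exact Sym2.mem_mk_left a b)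
  have hpb : pV b := hcl e'.val e'.prop b (by rw [hab]; exact Sym2.mem_mk_right a b)
  rw [hab, Sym2.map_pair_eq, toSub_of d hpa, toSub_of d hpb]
  constructor
  · intro h
    have h1 : a = w.val ∧ b = w.val := by
      rcases Sym2.eq_iff.1 h with ⟨u1, u2⟩ | ⟨u1, u2⟩ <;>
        exact ⟨congrArg Subtype.val u1, congrArg Subtype.val u2⟩
    rw [h1.1, h1.2]
  · intro h
    have h1 : a = w.val ∧ b = w.val := by
      rcases Sym2.eq_iff.1 h with ⟨u1, u2⟩ | ⟨u1, u2⟩ <;> exact ⟨u1, u2⟩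
    rw [Sym2.eq_iff]
    left
    exact ⟨Subtype.ext h1.1, Subtype.ext h1.2⟩

theorem restrict_degree (w : {v // pV v}) :
    (G.restrict pV pE d).degree w = G.degIn {e | pE e} w.val := by
  rw [degree, degIn, Set.sep_univ, Set.sep_univ, degIn]
  change {e' : {e // pE e} | w ∈ (G.restrict pV pE d).ends e'}.ncard
      + {e' : {e // pE e} | (G.restrict pV pE d).ends e' = s(w, w)}.ncard = _
  have h1 : {e' : {e // pE e} | w ∈ (G.restrict pV pE d).ends e'} =
      {e' : {e // pE e} | w.val ∈ G.ends e'.val} := by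
    ext e'; exact mem_restrict hcl
  have h2 : {e' : {e // pE e} | (G.restrict pV pE d).ends e' = s(w, w)} =
      {e' : {e // pE e} | G.ends e'.val = s(w.val, w.val)} := by
    ext e'; exact restrict_loop hcl
  rw [h1, h2, ncard_subtype_eq (p := pE) (fun ee => w.val ∈ G.ends ee),
    ncard_subtype_eq (p := pE) (fun ee => G.ends ee = s(w.val, w.val))]
  rfl

def Aut.restrictAut (f : G.Aut)
    (hV : ∀ v, pV v ↔ pV (f.toV v)) (hE : ∀ e, pE e ↔ pE (f.toE e)) :
    (G.restrict pV pE d).Aut where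
  toV := f.toV.subtypePerm (fun v => (hV v).symm)
  toE := f.toE.subtypePerm (fun e => (hE e).symm)
  ends_map := by
    intro e'
    show (G.ends (f.toE e'.val)).map (toSub pV d) = _
    rw [f.ends_map, Sym2.map_map]
    show _ = Sym2.map _ ((G.ends e'.val).map (toSub pV d))
    rw [Sym2.map_map]
    apply Sym2.map_congr'
    intro a ha
    have hpa : pV a := hcl e'.val e'.prop a ha
    have hpfa : pV (f.toV a) := (hV a).1 hpa
    show toSub pV d (f.toV a) = (f.toV.subtypePerm (fun v => (hV v).symm)) (toSub pV d a)
    rw [toSub_of d hpa, toSub_of d hpfa]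
    rfl

theorem restrictAut_toV (f : G.Aut) (hV) (hE) (w : {v // pV v}) :
    ((Aut.restrictAut (d := d) hcl f hV hE).toV w).val = f.toV w.val := rfl

theorem restrictAut_toE (f : G.Aut) (hV) (hE) (e' : {e // pE e}) :
    ((Aut.restrictAut (d := d) hcl f hV hE).toE e').val = f.toE e'.val := rfl

end Multigraph
namespace Multigraph

variable {V E : Type} {G : Multigraph V E}

/-! ### Splitting along a bridge -/

def sideV (G : Multigraph V E) (e : E) (x : V) : Set V :=
  {v | Relation.ReflTransGen (G.AdjOff {e}) x v}

def sideE (G : Multigraph V E) (e : E) (x : V) : Set E :=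
  {ee | ee ≠ e ∧ ∀ w ∈ G.ends ee, w ∈ G.sideV e x}

theorem sideV_self (e : E) (x : V) : x ∈ G.sideV e x := Relation.ReflTransGen.refl

theorem sideV_adj {e : E} {x v w : V} (hv : v ∈ G.sideV e x) (h : G.AdjOff {e} v w) :
    w ∈ G.sideV e x := Relation.ReflTransGen.tail hv h

theorem sideV_disj {e : E} {x y v : V}
    (hbr : ¬ Relation.ReflTransGen (G.AdjOff {e}) x y)
    (h1 : v ∈ G.sideV e x) (h2 : v ∈ G.sideV e y) : False :=
  hbr (h1.trans (reachOff_symm h2))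

theorem sideV_cover {e : E} {x y : V} (hconn : G.Connected) (hends : G.ends e = s(x, y)) :
    ∀ v, v ∈ G.sideV e x ∨ v ∈ G.sideV e y := by
  intro v
  have hwalk := hconn.2 x v
  induction hwalk with
  | refl => exact Or.inl (G.sideV_self e x)
  | tail _ hstep ih =>
      rename_i b c _
      obtain ⟨ee, hee⟩ := hstep
      by_cases hc : ee = e
      · rw [hc, hends] at hee
        have : c = x ∨ c = y := by
          rcases Sym2.eq_iff.1 hee with ⟨h1, h2⟩ | ⟨h1, h2⟩
          · exact Or.inr h2.symm
          · exact Or.inl h1.symm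
        rcases this with hcc | hcc
        · rw [hcc]; exact Or.inl (G.sideV_self e x)
        · rw [hcc]; exact Or.inr (G.sideV_self e y)
      · rcases ih with hb | hb
        · exact Or.inl (G.sideV_adj hb ⟨ee, by simpa using hc, hee⟩)
        · exact Or.inr (G.sideV_adj hb ⟨ee, by simpa using hc, hee⟩)

theorem mem_sideV_of_mem_ends {e : E} {x : V} {ee : E} (hne : ee ≠ e) {a w : V}
    (ha : a ∈ G.ends ee) (hw : w ∈ G.ends ee) (hax : a ∈ G.sideV e x) :
    w ∈ G.sideV e x := by
  obtain ⟨p, q, hpq⟩ := Sym2.exists_eq (G.ends ee)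
  rw [hpq, Sym2.mem_iff] at ha hw
  rcases ha with rfl | rfl <;> rcases hw with rfl | rfl
  · exact hax
  · exact G.sideV_adj hax ⟨ee, by simpa using hne, hpq⟩
  · exact G.sideV_adj hax ⟨ee, by simpa using hne, by rw [hpq, Sym2.eq_swap]⟩
  · exact hax

theorem sideE_cover {e : E} {x y : V} (hconn : G.Connected) (hends : G.ends e = s(x, y))
    {ee : E} (hne : ee ≠ e) : ee ∈ G.sideE e x ∨ ee ∈ G.sideE e y := by
  obtain ⟨a, b, hab⟩ := Sym2.exists_eq (G.ends ee)
  have ha : a ∈ G.ends ee := by rw [hab]; exact Sym2.mem_mk_left a b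
  rcases G.sideV_cover hconn hends a with hax | hay
  · exact Or.inl ⟨hne, fun w hw => G.mem_sideV_of_mem_ends hne ha hw hax⟩
  · exact Or.inr ⟨hne, fun w hw => G.mem_sideV_of_mem_ends hne ha hw hay⟩

theorem sideE_disj {e : E} {x y : V}
    (hbr : ¬ Relation.ReflTransGen (G.AdjOff {e}) x y)
    {ee : E} (h1 : ee ∈ G.sideE e x) (h2 : ee ∈ G.sideE e y) : False := by
  obtain ⟨a, b, hab⟩ := Sym2.exists_eq (G.ends ee)
  have ha : a ∈ G.ends ee := by rw [hab]; exact Sym2.mem_mk_left a b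
  exact G.sideV_disj hbr (h1.2 a ha) (h2.2 a ha)

theorem sideE_closed {e : E} {x : V} :
    ∀ ee, ee ∈ G.sideE e x → ∀ v ∈ G.ends ee, v ∈ G.sideV e x := fun _ h => h.2

def sideG (G : Multigraph V E) (e : E) (x : V) :
    Multigraph {v // v ∈ G.sideV e x} {ee // ee ∈ G.sideE e x} :=
  G.restrict (· ∈ G.sideV e x) (· ∈ G.sideE e x) ⟨x, G.sideV_self e x⟩

theorem sideG_reach_aux {e : E} {x : V} {u v : V}
    (h : Relation.ReflTransGen (G.AdjOff {e}) u v) :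
    ∀ (hu : u ∈ G.sideV e x) (hv : v ∈ G.sideV e x),
      Relation.ReflTransGen (G.sideG e x).Adj ⟨u, hu⟩ ⟨v, hv⟩ := by
  induction h with
  | refl => intro hu hv; exact Relation.ReflTransGen.refl
  | tail hpre hstep ih =>
      rename_i b c
      intro hu hv
      have hb : b ∈ G.sideV e x := hu.trans hpre
      refine (ih hu hb).tail ?_
      obtain ⟨ee, hee, hends'⟩ := hstep
      have hne : ee ≠ e := by simpa using hee
      have hmem : ee ∈ G.sideE e x := by
        refine ⟨hne, fun w hw => ?_⟩
        exact G.mem_sideV_of_mem_ends hne (by rw [hends']; exact Sym2.mem_mk_left b c) hw hb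
      refine ⟨⟨ee, hmem⟩, ?_⟩
      show (G.ends ee).map _ = _
      rw [hends', Sym2.map_pair_eq, toSub_of _ hb, toSub_of _ hv]

theorem sideG_connected {e : E} {x : V} : (G.sideG e x).Connected := by
  refine ⟨⟨⟨x, G.sideV_self e x⟩⟩, fun u v => ?_⟩
  obtain ⟨u, hu⟩ := u
  obtain ⟨v, hv⟩ := v
  have h1 := G.sideG_reach_aux (x := x) hu (G.sideV_self e x) hu
  have h2 := G.sideG_reach_aux (x := x) hv (G.sideV_self e x) hv
  exact (haveI : Std.Symm (G.sideG e x).Adj := ⟨fun _ _ h => adj_symm h⟩; Std.Symm.symm _ _ h1).trans h2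

theorem sideG_degree {e : E} {x y : V} (hends : G.ends e = s(x, y))
    (hbr : ¬ Relation.ReflTransGen (G.AdjOff {e}) x y)
    {v : V} (hv : v ∈ G.sideV e x) (hvx : v ≠ x) :
    G.degIn (G.sideE e x) v = G.degree v := by
  have key : ∀ ee, v ∈ G.ends ee → ee ∈ G.sideE e x := by
    intro ee hvee
    have hne : ee ≠ e := by
      intro heq
      rw [heq, hends, Sym2.mem_iff] at hvee
      rcases hvee with hvv | hvv
      · exact hvx hvv
      · rw [hvv] at hv
        exact G.sideV_disj hbr hv (G.sideV_self e y)
    exact ⟨hne, fun w hw => G.mem_sideV_of_mem_ends hne hvee hw hv⟩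
  rw [degree, degIn, degIn, Set.sep_univ, Set.sep_univ]
  congr 2
  · ext ee
    simp only [Set.mem_sep_iff, Set.mem_setOf_eq, and_iff_right_iff_imp]
    exact fun h => key ee h
  · ext ee
    simp only [Set.mem_sep_iff, Set.mem_setOf_eq, and_iff_right_iff_imp]
    intro h
    exact key ee (by rw [h]; simp)

theorem sideG_restrict_degree {e : E} {x : V} {v : V} (hv : v ∈ G.sideV e x) :
    (G.sideG e x).degree ⟨v, hv⟩ = G.degIn (G.sideE e x) v := by
  unfold sideG
  rw [restrict_degree (G.sideE_closed), Set.setOf_mem_eq]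

theorem sideG_degIn_root [Fintype E] {e : E} {x y : V} (hends : G.ends e = s(x, y))
    (hxy : x ≠ y) :
    G.degIn (G.sideE e y) y + 1 = G.degree y := by
  classical
  have hye : y ∈ G.ends e := by rw [hends]; exact Sym2.mem_mk_right x y
  have h1 : {ee | ee ∈ G.sideE e y ∧ y ∈ G.ends ee} = {ee | y ∈ G.ends ee} \ {e} := by
    ext ee
    simp only [Set.mem_setOf_eq, Set.mem_diff, Set.mem_singleton_iff]
    constructor
    · rintro ⟨⟨hne, _⟩, hy⟩; exact ⟨hy, hne⟩
    · rintro ⟨hy, hne⟩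
      exact ⟨⟨hne, fun w hw => G.mem_sideV_of_mem_ends hne hy hw (G.sideV_self e y)⟩, hy⟩
  have h2 : {ee | ee ∈ G.sideE e y ∧ G.ends ee = s(y, y)} = {ee | G.ends ee = s(y, y)} := by
    ext ee
    simp only [Set.mem_setOf_eq, and_iff_right_iff_imp]
    intro h
    have hne : ee ≠ e := by
      intro heq
      rw [heq, hends] at h
      rcases Sym2.eq_iff.1 h with ⟨h1', _⟩ | ⟨h1', _⟩ <;> exact hxy h1'
    exact ⟨hne, fun w hw => G.mem_sideV_of_mem_ends (a := y) hne (by rw [h]; simp) hw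
      (G.sideV_self e y)⟩
  rw [degree, degIn, degIn, Set.sep_univ, Set.sep_univ]
  have e1 : {ee | ee ∈ G.sideE e y ∧ y ∈ G.ends ee}.ncard + 1 = {ee | y ∈ G.ends ee}.ncard := by
    rw [h1]
    exact Set.ncard_diff_singleton_add_one hye (Set.toFinite _)
  have e2 : {ee | ee ∈ G.sideE e y ∧ G.ends ee = s(y, y)}.ncard
      = {ee | G.ends ee = s(y, y)}.ncard := by rw [h2]
  omega

end Multigraph
namespace Multigraph

variable {V E : Type} {G : Multigraph V E}

theorem sideV_card [Fintype V] {e : E} {x y : V} (hconn : G.Connected)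
    (hends : G.ends e = s(x, y)) (hbr : ¬ Relation.ReflTransGen (G.AdjOff {e}) x y) :
    Fintype.card {v // v ∈ G.sideV e x} + Fintype.card {v // v ∈ G.sideV e y}
      = Fintype.card V := by
  classical
  have hiff : ∀ v, v ∈ G.sideV e y ↔ ¬ (v ∈ G.sideV e x) :=
    fun v => ⟨fun h2 h1 => G.sideV_disj hbr h1 h2,
      fun h => (G.sideV_cover hconn hends v).resolve_left h⟩
  have h1 : Fintype.card {v // v ∈ G.sideV e y} = Fintype.card {v : V // ¬ (v ∈ G.sideV e x)} :=
    Fintype.card_congr (Equiv.subtypeEquivRight hiff)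
  have h2 := Fintype.card_subtype_compl (fun v => v ∈ G.sideV e x) (α := V)
  have h3 : Fintype.card {v // v ∈ G.sideV e x} ≤ Fintype.card V := Fintype.card_subtype_le _
  omega

theorem sideE_card [Fintype E] {e : E} {x y : V} (hconn : G.Connected)
    (hends : G.ends e = s(x, y)) (hbr : ¬ Relation.ReflTransGen (G.AdjOff {e}) x y) :
    Fintype.card {ee // ee ∈ G.sideE e x} + Fintype.card {ee // ee ∈ G.sideE e y} + 1
      = Fintype.card E := by
  classical
  have hAB : (Finset.univ.filter (· ∈ G.sideE e x)) ∪ (Finset.univ.filter (· ∈ G.sideE e y))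
      = Finset.univ.filter (· ≠ e) := by
    ext ee
    simp only [Finset.mem_union, Finset.mem_filter, Finset.mem_univ, true_and]
    constructor
    · rintro (h | h) <;> exact h.1
    · intro h
      exact G.sideE_cover hconn hends h
  have hdisj : Disjoint (Finset.univ.filter (· ∈ G.sideE e x))
      (Finset.univ.filter (· ∈ G.sideE e y)) := by
    rw [Finset.disjoint_left]
    intro ee h1 h2
    simp only [Finset.mem_filter, Finset.mem_univ, true_and] at h1 h2
    exact G.sideE_disj hbr h1 h2
  have hcard := Finset.card_union_of_disjoint hdisj
  rw [hAB] at hcard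
  have hC : (Finset.univ.filter (· ≠ e)).card = Fintype.card {ee // ee ≠ e} :=
    (Fintype.card_subtype _).symm
  have hD := card_delete (E := E) e
  rw [Fintype.card_subtype, Fintype.card_subtype]
  omega

theorem side_ncard_le [Fintype V] [Fintype E] {e : E} {x y : V}
    (hends : G.ends e = s(x, y)) (hbr : ¬ Relation.ReflTransGen (G.AdjOff {e}) x y)
    (hdeg : ∀ v, v ≠ x → 2 ≤ G.degree v) :
    (G.sideV e y).ncard ≤ (G.sideE e y).ncard := by
  classical
  have hxy : x ≠ y := fun h => hbr (h ▸ Relation.ReflTransGen.refl)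
  have hends' : G.ends e = s(y, x) := by rw [hends, Sym2.eq_swap]
  have hbr' : ¬ Relation.ReflTransGen (G.AdjOff {e}) y x := fun h => hbr (reachOff_symm h)
  have hsum := G.handshake (G.sideE e y) (G.sideV e y) (fun ee h => h.2)
  have hyW : y ∈ (G.sideV e y).toFinset := by
    rw [Set.mem_toFinset]; exact G.sideV_self e y
  have hroot : G.degIn (G.sideE e y) y + 1 = G.degree y := G.sideG_degIn_root hends hxy
  have hy2 : 2 ≤ G.degree y := hdeg y (Ne.symm hxy)
  have hothers : ∀ v ∈ (G.sideV e y).toFinset.erase y, 2 ≤ G.degIn (G.sideE e y) v := by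
    intro v hv
    have hvne : v ≠ y := Finset.ne_of_mem_erase hv
    have hvmem : v ∈ G.sideV e y := by
      have := Finset.mem_of_mem_erase hv
      rwa [Set.mem_toFinset] at this
    have hvx : v ≠ x := by
      intro h
      exact G.sideV_disj hbr (h ▸ G.sideV_self e x) hvmem
    rw [G.sideG_degree hends' hbr' hvmem hvne]
    exact hdeg v hvx
  have hsplit := Finset.sum_erase_add (G.sideV e y).toFinset (G.degIn (G.sideE e y)) hyW
  have hcard : (G.sideV e y).toFinset.card = (G.sideV e y).ncard :=
    (Set.ncard_eq_toFinset_card' _).symm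
  have herase : ((G.sideV e y).toFinset.erase y).card = (G.sideV e y).ncard - 1 := by
    rw [Finset.card_erase_of_mem hyW, hcard]
  have hbound : 2 * ((G.sideV e y).ncard - 1) ≤
      ∑ v ∈ (G.sideV e y).toFinset.erase y, G.degIn (G.sideE e y) v := by
    calc 2 * ((G.sideV e y).ncard - 1) = ((G.sideV e y).toFinset.erase y).card • 2 := by
          rw [herase, smul_eq_mul]; ring
      _ ≤ _ := Finset.card_nsmul_le_sum _ _ _ hothers
  have hpos : 1 ≤ (G.sideV e y).ncard := by
    rw [← hcard]
    exact Finset.card_pos.2 ⟨y, hyW⟩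
  omega

/-! ### Automorphisms and splitting -/

theorem aut_fixV_symm {f : G.Aut} {x : V} (h : f.toV x = x) : f.toV.symm x = x :=
  (Equiv.symm_apply_eq _).2 h.symm

theorem aut_fixE_symm {f : G.Aut} {e : E} (h : f.toE e = e) : f.toE.symm e = e :=
  (Equiv.symm_apply_eq _).2 h.symm

theorem aut_fix_other {f : G.Aut} {e : E} {x y : V} (hends : G.ends e = s(x, y))
    (hxy : x ≠ y) (hfx : f.toV x = x) (hfe : f.toE e = e) : f.toV y = y := by
  have h := f.ends_map e
  rw [hfe, hends, Sym2.map_pair_eq, hfx] at h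
  rcases Sym2.eq_iff.1 h with ⟨_, h2⟩ | ⟨h1, h2⟩
  · exact h2.symm
  · exact absurd h2.symm hxy

theorem aut_sideV_iff {f : G.Aut} {e : E} {x : V} (hfx : f.toV x = x) (hfe : f.toE e = e)
    (v : V) : v ∈ G.sideV e x ↔ f.toV v ∈ G.sideV e x := by
  constructor
  · intro h
    have := f.reachOff (e₀ := e) h
    rwa [hfe, hfx] at this
  · intro h
    have := f.inv.reachOff (e₀ := e) h
    simp only [Aut.inv_toV, Aut.inv_toE] at this
    rwa [aut_fixE_symm hfe, aut_fixV_symm hfx, Equiv.symm_apply_apply] at this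

theorem aut_sideE_iff {f : G.Aut} {e : E} {x : V} (hfx : f.toV x = x) (hfe : f.toE e = e)
    (ee : E) : ee ∈ G.sideE e x ↔ f.toE ee ∈ G.sideE e x := by
  constructor
  · intro h
    refine ⟨fun hc => h.1 (f.toE.injective (hc.trans hfe.symm)), fun w hw => ?_⟩
    rw [f.ends_map, Sym2.mem_map] at hw
    obtain ⟨a, ha, rfl⟩ := hw
    exact (aut_sideV_iff hfx hfe a).1 (h.2 a ha)
  · intro h
    constructor
    · intro hc
      rw [hc, hfe] at h
      exact h.1 rfl
    · intro w hw
      exact (aut_sideV_iff hfx hfe w).2 (h.2 (f.toV w) (f.mem_ends hw))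

def Aut.sideAut (f : G.Aut) {e : E} {x : V} (hfx : f.toV x = x) (hfe : f.toE e = e) :
    (G.sideG e x).Aut :=
  Aut.restrictAut (d := ⟨x, G.sideV_self e x⟩) G.sideE_closed f
    (aut_sideV_iff hfx hfe) (aut_sideE_iff hfx hfe)

theorem sideAut_toV (f : G.Aut) {e : E} {x : V} (hfx : f.toV x = x) (hfe : f.toE e = e)
    (w : {v // v ∈ G.sideV e x}) : ((f.sideAut hfx hfe).toV w).val = f.toV w.val := rfl

theorem sideAut_toE (f : G.Aut) {e : E} {x : V} (hfx : f.toV x = x) (hfe : f.toE e = e)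
    (ee : {ee // ee ∈ G.sideE e x}) : ((f.sideAut hfx hfe).toE ee).val = f.toE ee.val := rfl

theorem sideAut_fix (f : G.Aut) {e : E} {x : V} (hfx : f.toV x = x) (hfe : f.toE e = e) :
    (f.sideAut hfx hfe).toV ⟨x, G.sideV_self e x⟩ = ⟨x, G.sideV_self e x⟩ :=
  Subtype.ext hfx

theorem split_card_le [Fintype V] [Fintype E] {e : E} {x y : V} (hconn : G.Connected)
    (hends : G.ends e = s(x, y)) (hbr : ¬ Relation.ReflTransGen (G.AdjOff {e}) x y) :
    Nat.card {f : G.Aut // f.toV x = x ∧ f.toE e = e} ≤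
      Nat.card {fx : (G.sideG e x).Aut // fx.toV ⟨x, G.sideV_self e x⟩ = ⟨x, G.sideV_self e x⟩} *
      Nat.card {fy : (G.sideG e y).Aut // fy.toV ⟨y, G.sideV_self e y⟩ = ⟨y, G.sideV_self e y⟩} := by
  classical
  have hxy : x ≠ y := fun h => hbr (h ▸ Relation.ReflTransGen.refl)
  rw [← Nat.card_prod]
  have hΦinj : Function.Injective
      (fun (fp : {f : G.Aut // f.toV x = x ∧ f.toE e = e}) =>
        ((⟨fp.val.sideAut fp.prop.1 fp.prop.2, sideAut_fix _ _ _⟩,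
          ⟨fp.val.sideAut (aut_fix_other hends hxy fp.prop.1 fp.prop.2) fp.prop.2,
            sideAut_fix _ _ _⟩) :
          {fx : (G.sideG e x).Aut // fx.toV ⟨x, G.sideV_self e x⟩ = ⟨x, G.sideV_self e x⟩} ×
          {fy : (G.sideG e y).Aut // fy.toV ⟨y, G.sideV_self e y⟩ = ⟨y, G.sideV_self e y⟩})) := by
    rintro ⟨f1, hf1⟩ ⟨f2, hf2⟩ heq
    simp only [Prod.mk.injEq, Subtype.mk.injEq] at heq
    obtain ⟨e1, e2⟩ := heq
    apply Subtype.ext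
    apply Aut.ext'
    · ext v
      rcases G.sideV_cover hconn hends v with hv | hv
      · exact congrArg (fun (q : (G.sideG e x).Aut) => (q.toV ⟨v, hv⟩).val) e1
      · exact congrArg (fun (q : (G.sideG e y).Aut) => (q.toV ⟨v, hv⟩).val) e2
    · ext ee
      by_cases hc : ee = e
      · rw [hc, hf1.2, hf2.2]
      · rcases G.sideE_cover hconn hends hc with he | he
        · exact congrArg (fun (q : (G.sideG e x).Aut) => (q.toE ⟨ee, he⟩).val) e1
        · exact congrArg (fun (q : (G.sideG e y).Aut) => (q.toE ⟨ee, he⟩).val) e2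
  exact Nat.card_le_card_of_injective _ hΦinj

end Multigraph
namespace Multigraph

variable {V E : Type}

theorem reach_eq_of_isEmpty {G : Multigraph V E} (hE : IsEmpty E) {u v : V}
    (h : Relation.ReflTransGen G.Adj u v) : u = v := by
  induction h with
  | refl => rfl
  | tail _ hstep ih =>
      obtain ⟨e, _⟩ := hstep
      exact hE.elim e

theorem conn_card_le : ∀ (n : ℕ) (V E : Type) (_iV : Fintype V) (_iE : Fintype E)
    (G : Multigraph V E), Fintype.card E ≤ n → G.Connected →
    Fintype.card V ≤ Fintype.card E + 1 := by
  intro n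
  induction n using Nat.strongRecOn with
  | ind n ih =>
    intro V E iV iE G hE hconn
    by_cases hE0 : Fintype.card E = 0
    · have hempty : IsEmpty E := Fintype.card_eq_zero_iff.1 hE0
      have hsing : ∀ u v : V, u = v := fun u v => reach_eq_of_isEmpty hempty (hconn.2 u v)
      have : Subsingleton V := ⟨hsing⟩
      have := Fintype.card_le_one_iff_subsingleton.2 this
      omega
    · obtain ⟨e⟩ : Nonempty E := Fintype.card_pos_iff.1 (by omega)
      by_cases hbr : G.IsBridge e
      · obtain ⟨u, w, hends, hnr⟩ := hbr
        have hVs := G.sideV_card hconn hends hnr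
        have hEs := G.sideE_card hconn hends hnr
        have hu : Fintype.card {v // v ∈ G.sideV e u} ≤
            Fintype.card {ee // ee ∈ G.sideE e u} + 1 := by
          exact ih (Fintype.card {ee // ee ∈ G.sideE e u}) (by omega) _ _
            inferInstance inferInstance (G.sideG e u) le_rfl G.sideG_connected
        have hends' : G.ends e = s(w, u) := by rw [hends, Sym2.eq_swap]
        have hnr' : ¬ Relation.ReflTransGen (G.AdjOff {e}) w u := fun h => hnr (reachOff_symm h)
        have hw : Fintype.card {v // v ∈ G.sideV e w} ≤
            Fintype.card {ee // ee ∈ G.sideE e w} + 1 := by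
          exact ih (Fintype.card {ee // ee ∈ G.sideE e w}) (by omega) _ _
            inferInstance inferInstance (G.sideG e w) le_rfl G.sideG_connected
        omega
      · have hconn' := delete_connected hconn hbr
        have hcard := card_delete (E := E) e
        have := ih (Fintype.card E - 1) (by omega) V {e' // e' ≠ e} inferInstance inferInstance
          (G.delete e) (by omega) hconn'
        omega

end Multigraph
namespace Multigraph

variable {V E : Type} {G : Multigraph V E}

/-! ### Contraction of a non-loop edge -/

def ctr (x y : V) (hne : x ≠ y) : V → {v // v ≠ y} :=
  fun v => if h : v = y then ⟨x, hne⟩ else ⟨v, h⟩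

theorem ctr_of {x y : V} (hne : x ≠ y) {v : V} (h : v ≠ y) : ctr x y hne v = ⟨v, h⟩ :=
  dif_neg h

theorem ctr_y {x y : V} (hne : x ≠ y) : ctr x y hne y = ⟨x, hne⟩ := dif_pos rfl

def contract (G : Multigraph V E) (e : E) (x y : V) (hne : x ≠ y) :
    Multigraph {v // v ≠ y} {e' // e' ≠ e} :=
  ⟨fun e' => (G.ends e'.val).map (ctr x y hne)⟩

theorem contract_reach_aux {e : E} {x y : V} {hne : x ≠ y} (hends : G.ends e = s(x, y))
    {u v : V} (h : Relation.ReflTransGen G.Adj u v) :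
    Relation.ReflTransGen (G.contract e x y hne).Adj (ctr x y hne u) (ctr x y hne v) := by
  induction h with
  | refl => exact Relation.ReflTransGen.refl
  | tail _ hstep ih =>
      rename_i b c _
      obtain ⟨ee, hee⟩ := hstep
      by_cases hc : ee = e
      · rw [hc, hends] at hee
        have : ctr x y hne b = ctr x y hne c := by
          rcases Sym2.eq_iff.1 hee with ⟨h1, h2⟩ | ⟨h1, h2⟩
          · rw [← h1, ← h2, ctr_of hne hne, ctr_y hne]
          · rw [← h1, ← h2, ctr_of hne hne, ctr_y hne]
        rwa [this] at ih
      · refine ih.tail ⟨⟨ee, hc⟩, ?_⟩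
        show (G.ends ee).map _ = _
        rw [hee, Sym2.map_pair_eq]

theorem contract_connected {e : E} {x y : V} {hne : x ≠ y} (hconn : G.Connected)
    (hends : G.ends e = s(x, y)) : (G.contract e x y hne).Connected := by
  refine ⟨⟨⟨x, hne⟩⟩, fun u v => ?_⟩
  have := contract_reach_aux (hne := hne) hends (hconn.2 u.val v.val)
  rwa [ctr_of hne u.prop, ctr_of hne v.prop, Subtype.coe_eta, Subtype.coe_eta] at this

theorem contract_card_V [Fintype V] {y : V} :
    Fintype.card {v // v ≠ y} + 1 = Fintype.card V := card_delete (E := V) y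

theorem contract_degree [Fintype E] {e : E} {x y : V} {hne : x ≠ y}
    (hends : G.ends e = s(x, y)) {v : V} (hv : v ≠ y) (hvx : v ≠ x) :
    (G.contract e x y hne).degree ⟨v, hv⟩ = G.degree v := by
  classical
  have hmem : ∀ ee : E, ((⟨v, hv⟩ : {v // v ≠ y}) ∈ (G.ends ee).map (ctr x y hne))
      ↔ v ∈ G.ends ee := by
    intro ee
    rw [Sym2.mem_map]
    constructor
    · rintro ⟨a, ha, hctr⟩
      by_cases hay : a = y
      · rw [hay, ctr_y hne] at hctr
        exact absurd (congrArg Subtype.val hctr) (Ne.symm hvx)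
      · rw [ctr_of hne hay] at hctr
        have hav : a = v := congrArg Subtype.val hctr
        rw [← hav]
        exact ha
    · intro hvee
      exact ⟨v, hvee, ctr_of hne hv⟩
  have hloop : ∀ ee : E, ((G.ends ee).map (ctr x y hne) = s(⟨v, hv⟩, ⟨v, hv⟩))
      ↔ G.ends ee = s(v, v) := by
    intro ee
    obtain ⟨a, b, hab⟩ := Sym2.exists_eq (G.ends ee)
    rw [hab, Sym2.map_pair_eq]
    have hval : ∀ (c : V), ctr x y hne c = ⟨v, hv⟩ → c = v := by
      intro c hc
      by_cases hcy : c = y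
      · rw [hcy, ctr_y hne] at hc
        exact absurd (congrArg Subtype.val hc) (Ne.symm hvx)
      · rw [ctr_of hne hcy] at hc
        exact congrArg Subtype.val hc
    constructor
    · intro h
      rcases Sym2.eq_iff.1 h with ⟨h1, h2⟩ | ⟨h1, h2⟩ <;>
        · rw [hval a h1, hval b h2]
    · intro h
      have h1 : a = v ∧ b = v := by
        rcases Sym2.eq_iff.1 h with ⟨h1, h2⟩ | ⟨h1, h2⟩ <;> exact ⟨h1, h2⟩
      rw [h1.1, h1.2, ctr_of hne hv]
  have hvnotine : ¬ v ∈ G.ends e := by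
    rw [hends, Sym2.mem_iff]
    rintro (h | h) <;> [exact hvx h; exact hv h]
  rw [degree, degIn, Set.sep_univ, Set.sep_univ]
  change {e' : {ee // ee ≠ e} | (⟨v, hv⟩ : {v // v ≠ y}) ∈ (G.ends e'.val).map (ctr x y hne)}.ncard
      + {e' : {ee // ee ≠ e} | (G.ends e'.val).map (ctr x y hne) = s(⟨v, hv⟩, ⟨v, hv⟩)}.ncard = _
  rw [ncard_subtype_eq (p := fun e' => e' ≠ e)
      (fun ee => (⟨v, hv⟩ : {v // v ≠ y}) ∈ (G.ends ee).map (ctr x y hne)),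
    ncard_subtype_eq (p := fun e' => e' ≠ e)
      (fun ee => (G.ends ee).map (ctr x y hne) = s(⟨v, hv⟩, ⟨v, hv⟩))]
  rw [degree_expand]
  congr 1
  · congr 1
    ext ee
    simp only [Set.mem_setOf_eq, hmem]
    constructor
    · rintro ⟨_, h⟩; exact h
    · intro h
      refine ⟨fun hc => hvnotine (hc ▸ h), h⟩
  · congr 1
    ext ee
    simp only [Set.mem_setOf_eq, hloop]
    constructor
    · rintro ⟨_, h⟩; exact h
    · intro h
      refine ⟨fun hc => hvnotine (by rw [← hc, h]; simp), h⟩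

def Aut.contractAut {e : E} {x y : V} {hne : x ≠ y} (f : G.Aut)
    (hfx : f.toV x = x) (hfy : f.toV y = y) (hfe : f.toE e = e) :
    (G.contract e x y hne).Aut where
  toV := f.toV.subtypePerm (fun v => Iff.symm <| by
    constructor
    · intro h hc
      exact h (by rw [← hfy] at hc; exact f.toV.injective hc)
    · intro h hc
      exact h (by rw [hc, hfy]))
  toE := f.toE.subtypePerm (fun ee => Iff.symm <| by
    constructor
    · intro h hc
      exact h (f.toE.injective (hc.trans hfe.symm))
    · intro h hc
      exact h (by rw [hc, hfe]))
  ends_map := by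
    intro e'
    show (G.ends (f.toE e'.val)).map (ctr x y hne) = _
    rw [f.ends_map, Sym2.map_map]
    show _ = Sym2.map _ ((G.ends e'.val).map (ctr x y hne))
    rw [Sym2.map_map]
    apply Sym2.map_congr'
    intro a _
    by_cases hay : a = y
    · rw [hay]
      show ctr x y hne (f.toV y) = f.toV.subtypePerm _ (ctr x y hne y)
      apply Subtype.ext
      show (ctr x y hne (f.toV y)).val = f.toV (ctr x y hne y).val
      rw [hfy, ctr_y hne]
      exact hfx.symm
    · have hfay : f.toV a ≠ y := fun hc => hay (by rw [← hfy] at hc; exact f.toV.injective hc)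
      show ctr x y hne (f.toV a) = _
      rw [ctr_of hne hfay]
      show _ = f.toV.subtypePerm _ (ctr x y hne a)
      rw [ctr_of hne hay]
      exact Subtype.ext rfl

theorem contractAut_toV {e : E} {x y : V} {hne : x ≠ y} (f : G.Aut)
    (hfx : f.toV x = x) (hfy : f.toV y = y) (hfe : f.toE e = e) (w : {v // v ≠ y}) :
    ((Aut.contractAut (hne := hne) f hfx hfy hfe).toV w).val = f.toV w.val := rfl

theorem contractAut_toE {e : E} {x y : V} {hne : x ≠ y} (f : G.Aut)
    (hfx : f.toV x = x) (hfy : f.toV y = y) (hfe : f.toE e = e) (e' : {ee // ee ≠ e}) :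
    ((Aut.contractAut (hne := hne) f hfx hfy hfe).toE e').val = f.toE e'.val := rfl

/-- walks avoiding a degree-2 vertex's pair of edges -/
theorem reach_avoid_two {e e₂ : E} {x y y₂ : V} (hends₂ : G.ends e₂ = s(y, y₂))
    (hy₂ : y₂ ≠ y) (honly : ∀ ee, y ∈ G.ends ee → ee = e ∨ ee = e₂) (hxy : x ≠ y)
    (h : Relation.ReflTransGen (G.AdjOff {e}) x y) :
    Relation.ReflTransGen (G.AdjOff {e, e₂}) x y₂ := by
  classical
  suffices hP : ∀ v, Relation.ReflTransGen (G.AdjOff {e}) x v →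
      ((v ≠ y ∧ Relation.ReflTransGen (G.AdjOff {e, e₂}) x v) ∨
       (v = y ∧ Relation.ReflTransGen (G.AdjOff {e, e₂}) x y₂)) by
    rcases hP y h with ⟨hc, _⟩ | ⟨_, hr⟩
    · exact absurd rfl hc
    · exact hr
  intro v hv
  induction hv with
  | refl => exact Or.inl ⟨hxy, Relation.ReflTransGen.refl⟩
  | tail _ hstep ih =>
      rename_i b c _
      obtain ⟨ee, heenotmem, hends'⟩ := hstep
      have hee : ee ≠ e := by simpa using heenotmem
      rcases ih with ⟨hby, hr⟩ | ⟨hby, hr⟩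
      · by_cases hc2 : ee = e₂
        · rw [hc2, hends₂] at hends'
          rcases Sym2.eq_iff.1 hends' with ⟨h1, h2⟩ | ⟨h1, h2⟩
          · exact absurd h1.symm hby
          · right
            refine ⟨h1.symm, ?_⟩
            rw [h2]
            exact hr
        · have hstep' : G.AdjOff {e, e₂} b c :=
            ⟨ee, by simp [hee, hc2], hends'⟩
          by_cases hcy : c = y
          · exfalso
            have hyee : y ∈ G.ends ee := by
              rw [hends', ← hcy]; exact Sym2.mem_mk_right b c
            rcases honly ee hyee with h' | h'
            · exact hee h'
            · exact hc2 h'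
          · exact Or.inl ⟨hcy, hr.tail hstep'⟩
      · subst hby
        have hbee : b ∈ G.ends ee := by rw [hends']; exact Sym2.mem_mk_left b c
        rcases honly ee hbee with h' | h'
        · exact absurd h' hee
        · subst h'
          rw [hends₂] at hends'
          rcases Sym2.eq_iff.1 hends' with ⟨h1, h2⟩ | ⟨h1, h2⟩
          · left
            refine ⟨fun hc => hy₂ (h2.trans hc), ?_⟩
            rw [← h2]
            exact hr
          · exact absurd h2 hy₂

theorem contract_adjOff_map {e : E} {x y : V} {hne : x ≠ y} {e₂ : E} (he₂ : e₂ ≠ e)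
    {u w : V} (h : G.AdjOff {e, e₂} u w) :
    (G.contract e x y hne).AdjOff {(⟨e₂, he₂⟩ : {ee // ee ≠ e})}
      (ctr x y hne u) (ctr x y hne w) := by
  obtain ⟨ee, hee, hends'⟩ := h
  have h1 : ee ≠ e := fun hc => hee (by simp [hc])
  have h2 : ee ≠ e₂ := fun hc => hee (by simp [hc])
  refine ⟨⟨ee, h1⟩, by simpa using fun hc => h2 hc, ?_⟩
  show (G.ends ee).map _ = _
  rw [hends', Sym2.map_pair_eq]

theorem contract_not_bridge {e : E} {x y : V} {hne : x ≠ y} {e₂ : E} (he₂ : e₂ ≠ e)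
    {y₂ : V} (hends₂ : G.ends e₂ = s(y, y₂))
    (hreach : Relation.ReflTransGen (G.AdjOff {e, e₂}) x y₂) :
    ¬ (G.contract e x y hne).IsBridge ⟨e₂, he₂⟩ := by
  rintro ⟨u', w', h1, h2⟩
  have hmap : Relation.ReflTransGen
      ((G.contract e x y hne).AdjOff {(⟨e₂, he₂⟩ : {ee // ee ≠ e})})
      (ctr x y hne x) (ctr x y hne y₂) :=
    Relation.ReflTransGen.lift _ (fun _ _ hr => contract_adjOff_map he₂ hr) _ _ hreach
  rw [ctr_of hne hne] at hmap
  have hends'' : (G.contract e x y hne).ends ⟨e₂, he₂⟩ = s(⟨x, hne⟩, ctr x y hne y₂) := by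
    show (G.ends e₂).map _ = _
    rw [hends₂, Sym2.map_pair_eq, ctr_y hne]
  rw [hends''] at h1
  rcases Sym2.eq_iff.1 h1 with ⟨hu, hw⟩ | ⟨hu, hw⟩
  · exact h2 (hu ▸ hw ▸ hmap)
  · exact h2 (hu ▸ hw ▸ reachOff_symm hmap)

end Multigraph
namespace Multigraph

variable {V E : Type} {G : Multigraph V E}

theorem degIn_eq_degree_of (F : Set E) (v : V)
    (hall : ∀ ee, v ∈ G.ends ee → ee ∈ F) : G.degIn F v = G.degree v := by
  rw [degree, degIn, degIn, Set.sep_univ, Set.sep_univ]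
  congr 2
  · ext ee
    simp only [Set.mem_sep_iff, Set.mem_setOf_eq, and_iff_right_iff_imp]
    exact fun h => hall ee h
  · ext ee
    simp only [Set.mem_sep_iff, Set.mem_setOf_eq, and_iff_right_iff_imp]
    intro h
    exact hall ee (by rw [h]; simp)

theorem bridge_other {e : E} {x : V} (he : G.IsBridge e) (hx : x ∈ G.ends e) :
    ∃ y, G.ends e = s(x, y) ∧ y ≠ x ∧ ¬ Relation.ReflTransGen (G.AdjOff {e}) x y := by
  obtain ⟨u, v, hends, hno⟩ := he
  rw [hends, Sym2.mem_iff] at hx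
  rcases hx with rfl | rfl
  · refine ⟨v, hends, fun hc => hno ?_, hno⟩
    rw [hc]
  · refine ⟨u, by rw [hends, Sym2.eq_swap], fun hc => hno ?_, fun hr => hno (reachOff_symm hr)⟩
    rw [hc]

theorem exists_edge_at (hconn : G.Connected) (x : V) (hE : Nonempty E) :
    ∃ ee, x ∈ G.ends ee := by
  by_cases hV : ∀ v : V, v = x
  · obtain ⟨e⟩ := hE
    obtain ⟨a, b, hab⟩ := Sym2.exists_eq (G.ends e)
    refine ⟨e, ?_⟩
    rw [hab, ← hV a]
    exact Sym2.mem_mk_left a b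
  · push_neg at hV
    obtain ⟨u, hu⟩ := hV
    rcases Relation.ReflTransGen.cases_head (hconn.2 x u) with h | ⟨c, hxc, _⟩
    · exact absurd h.symm hu
    · obtain ⟨ee, hee⟩ := hxc
      exact ⟨ee, by rw [hee]; exact Sym2.mem_mk_left x c⟩

theorem factorial_helper {a b : ℕ} (hb : 1 ≤ b) :
    a.factorial * b.factorial ≤ b * (a + b - 1).factorial := by
  obtain ⟨b', rfl⟩ : ∃ b', b = b' + 1 := ⟨b - 1, by omega⟩
  have h1 : a.factorial * b'.factorial ≤ (a + b').factorial :=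
    Nat.le_of_dvd (Nat.factorial_pos _) (Nat.factorial_mul_factorial_dvd_factorial_add a b')
  calc a.factorial * (b' + 1).factorial = (b' + 1) * (a.factorial * b'.factorial) := by
        rw [Nat.factorial_succ]; ring
    _ ≤ (b' + 1) * (a + b').factorial := Nat.mul_le_mul_left _ h1
    _ = (b' + 1) * (a + (b' + 1) - 1).factorial := by
        have h2 : a + (b' + 1) - 1 = a + b' := by omega
        rw [h2]

theorem card_fiber_bound {α β : Type} [Finite α] [Fintype β] (F : α → β) (bound : β → ℕ)
    (hb : ∀ b : β, Nat.card {a : α // F a = b} ≤ bound b) :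
    Nat.card α ≤ ∑ b : β, bound b := by
  classical
  have : Fintype α := Fintype.ofFinite α
  rw [Nat.card_eq_fintype_card]
  have hcard : Fintype.card α = ∑ b : β, (Finset.univ.filter (fun a => F a = b)).card := by
    rw [← Finset.card_univ]
    exact Finset.card_eq_sum_card_fiberwise (fun a _ => Finset.mem_univ (F a))
  rw [hcard]
  apply Finset.sum_le_sum
  intro b _
  have : (Finset.univ.filter (fun a => F a = b)).card = Nat.card {a : α // F a = b} := by
    rw [Nat.card_eq_fintype_card, Fintype.card_subtype]
  rw [this]
  exact hb b

theorem ncard_setOf_eq_card_subtype [Fintype E] (P : E → Prop) :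
    {ee : E | P ee}.ncard = Nat.card {ee : E // P ee} := by
  classical
  rw [Nat.card_eq_fintype_card, Set.ncard_eq_toFinset_card', Set.toFinset_setOf,
    Fintype.card_subtype]

theorem ncard_coe_subtype (S : Set E) : Nat.card {ee : E // ee ∈ S} = S.ncard := by
  have : Nat.card {ee : E // ee ∈ S} = Nat.card S := rfl
  rw [this, Nat.card_coe_set_eq]

theorem far_disjoint {e₁ e₂ : E} {x y₁ y₂ : V} (hne : e₁ ≠ e₂) (hconn : G.Connected)
    (hends₁ : G.ends e₁ = s(x, y₁)) (hbr₁ : ¬ Relation.ReflTransGen (G.AdjOff {e₁}) x y₁)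
    (hends₂ : G.ends e₂ = s(x, y₂)) (hbr₂ : ¬ Relation.ReflTransGen (G.AdjOff {e₂}) x y₂)
    {v : V} (h₁ : v ∈ G.sideV e₁ y₁) (h₂ : v ∈ G.sideV e₂ y₂) : False := by
  have hcover : ∀ w, w ∈ G.sideV e₁ x ∨ w ∈ G.sideV e₂ x := by
    intro w
    have hw := hconn.2 x w
    induction hw with
    | refl => exact Or.inl (G.sideV_self e₁ x)
    | tail _ hstep ih =>
        rename_i b c _
        obtain ⟨ee, hee⟩ := hstep
        by_cases hc1 : ee = e₁
        · rw [hc1, hends₁] at hee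
          have : c = x ∨ c = y₁ := by
            rcases Sym2.eq_iff.1 hee with ⟨p1, p2⟩ | ⟨p1, p2⟩
            · exact Or.inr p2.symm
            · exact Or.inl p1.symm
          rcases this with hcc | hcc
          · rw [hcc]; exact Or.inl (G.sideV_self e₁ x)
          · right
            rw [hcc]
            exact Relation.ReflTransGen.single ⟨e₁, by simpa using hne, hends₁⟩
        · by_cases hc2 : ee = e₂
          · rw [hc2, hends₂] at hee
            have : c = x ∨ c = y₂ := by
              rcases Sym2.eq_iff.1 hee with ⟨p1, p2⟩ | ⟨p1, p2⟩
              · exact Or.inr p2.symm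
              · exact Or.inl p1.symm
            rcases this with hcc | hcc
            · rw [hcc]; exact Or.inl (G.sideV_self e₁ x)
            · left
              rw [hcc]
              exact Relation.ReflTransGen.single ⟨e₂, by simpa using (Ne.symm hne), hends₂⟩
          · rcases ih with hb | hb
            · exact Or.inl (G.sideV_adj hb ⟨ee, by simpa using hc1, hee⟩)
            · exact Or.inr (G.sideV_adj hb ⟨ee, by simpa using hc2, hee⟩)
  rcases hcover v with h | h
  · exact G.sideV_disj hbr₁ h h₁
  · exact G.sideV_disj hbr₂ h h₂

end Multigraph
namespace Multigraph

variable {V E : Type} {G : Multigraph V E}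

theorem key_count [Fintype V] [Fintype E] (x : V) (g : ℕ) (hconn : G.Connected)
    (hdeg : ∀ v, v ≠ x → 2 ≤ G.degree v)
    (hbetti : Fintype.card E + 1 = Fintype.card V + g) (yb : E → V)
    (hyb : ∀ ee, x ∈ G.ends ee → G.IsBridge ee →
      G.ends ee = s(x, yb ee) ∧ yb ee ≠ x ∧
        ¬ Relation.ReflTransGen (G.AdjOff {ee}) x (yb ee)) :
    (Finset.univ.filter (fun ee => x ∈ G.ends ee ∧ ¬ G.IsBridge ee)).card
      + 2 * ∑ ee ∈ Finset.univ.filter (fun ee => x ∈ G.ends ee ∧ G.IsBridge ee),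
          ((G.sideE ee (yb ee)).ncard + 1 - (G.sideV ee (yb ee)).ncard) ≤ 2 * g := by
  classical
  set XB : Finset E := Finset.univ.filter (fun ee => x ∈ G.ends ee ∧ G.IsBridge ee) with hXB
  have hP : ∀ ee ∈ XB, G.ends ee = s(x, yb ee) ∧ yb ee ≠ x ∧
      ¬ Relation.ReflTransGen (G.AdjOff {ee}) x (yb ee) := by
    intro ee hee
    rw [hXB, Finset.mem_filter] at hee
    exact hyb ee hee.2.1 hee.2.2
  -- x is not in any far vertex set
  have hxfar : ∀ ee ∈ XB, x ∉ G.sideV ee (yb ee) := by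
    intro ee hee hc
    exact G.sideV_disj (hP ee hee).2.2 (G.sideV_self ee x) hc
  -- members of far edge sets have all their ends in the far vertex set (by def)
  -- far vertex sets are pairwise disjoint
  have hdisjV : ∀ ee₁ ∈ XB, ∀ ee₂ ∈ XB, ee₁ ≠ ee₂ →
      ∀ v, v ∈ G.sideV ee₁ (yb ee₁) → v ∈ G.sideV ee₂ (yb ee₂) → False := by
    intro ee₁ h1 ee₂ h2 hne v hv1 hv2
    exact far_disjoint hne hconn (hP ee₁ h1).1 (hP ee₁ h1).2.2
      (hP ee₂ h2).1 (hP ee₂ h2).2.2 hv1 hv2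
  set BV : Finset V := XB.biUnion (fun ee => (G.sideV ee (yb ee)).toFinset) with hBV
  set BE : Finset E := XB.biUnion (fun ee => (G.sideE ee (yb ee)).toFinset) with hBE
  have hBVcard : BV.card = ∑ ee ∈ XB, (G.sideV ee (yb ee)).ncard := by
    rw [hBV, Finset.card_biUnion]
    · exact Finset.sum_congr rfl (fun ee _ => (Set.ncard_eq_toFinset_card' _).symm)
    · intro ee₁ h1 ee₂ h2 hne
      rw [Function.onFun, Finset.disjoint_left]
      intro v hv1 hv2
      rw [Set.mem_toFinset] at hv1 hv2
      exact hdisjV ee₁ h1 ee₂ h2 hne v hv1 hv2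
  have hBEcard : BE.card = ∑ ee ∈ XB, (G.sideE ee (yb ee)).ncard := by
    rw [hBE, Finset.card_biUnion]
    · exact Finset.sum_congr rfl (fun ee _ => (Set.ncard_eq_toFinset_card' _).symm)
    · intro ee₁ h1 ee₂ h2 hne
      rw [Function.onFun, Finset.disjoint_left]
      intro ef hv1 hv2
      rw [Set.mem_toFinset] at hv1 hv2
      obtain ⟨a, b, hab⟩ := Sym2.exists_eq (G.ends ef)
      have ha : a ∈ G.ends ef := by rw [hab]; exact Sym2.mem_mk_left a b
      exact hdisjV ee₁ h1 ee₂ h2 hne a (hv1.2 a ha) (hv2.2 a ha)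
  -- bridges at x are not in BE
  have hXBnotBE : ∀ ee ∈ XB, ee ∉ BE := by
    intro ee hee hc
    rw [hBE, Finset.mem_biUnion] at hc
    obtain ⟨i, hi, hmem⟩ := hc
    rw [Set.mem_toFinset] at hmem
    have hx' : x ∈ G.ends ee := by
      rw [(hP ee hee).1]; exact Sym2.mem_mk_left _ _
    exact hxfar i hi (hmem.2 x hx')
  -- any edge not in BE having an end in some far set must be that bridge
  have hBEmem : ∀ i ∈ XB, ∀ ef, ef ∉ BE → ef ≠ i →
      ∀ w ∈ G.ends ef, w ∉ G.sideV i (yb i) := by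
    intro i hi ef hef hne w hw hc
    apply hef
    rw [hBE, Finset.mem_biUnion]
    refine ⟨i, hi, ?_⟩
    rw [Set.mem_toFinset]
    exact ⟨hne, fun w' hw' => G.mem_sideV_of_mem_ends hne hw hw' hc⟩
  set W₀ : Set V := {v | v ∉ BV} with hW₀
  set F₀ : Set E := {ee | ee ∉ BE ∧ ee ∉ XB} with hF₀
  have hxW : x ∈ W₀ := by
    rw [hW₀, Set.mem_setOf_eq, hBV, Finset.mem_biUnion]
    rintro ⟨i, hi, hmem⟩
    rw [Set.mem_toFinset] at hmem
    exact hxfar i hi hmem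
  -- closure
  have hclosure : ∀ ee ∈ F₀, ∀ w ∈ G.ends ee, w ∈ W₀ := by
    intro ee hee w hw
    rw [hF₀, Set.mem_setOf_eq] at hee
    rw [hW₀, Set.mem_setOf_eq, hBV, Finset.mem_biUnion]
    rintro ⟨i, hi, hmem⟩
    rw [Set.mem_toFinset] at hmem
    by_cases hne : ee = i
    · exact hee.2 (hne ▸ hi)
    · exact hBEmem i hi ee hee.1 hne w hw hmem
  have hHS := G.handshake F₀ W₀ hclosure
  -- degree facts
  have hfull : ∀ v ∈ W₀, v ≠ x → G.degIn F₀ v = G.degree v := by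
    intro v hvW hvx
    apply degIn_eq_degree_of
    intro ee hvee
    rw [hF₀, Set.mem_setOf_eq]
    constructor
    · intro hc
      rw [hBE, Finset.mem_biUnion] at hc
      obtain ⟨i, hi, hmem⟩ := hc
      rw [Set.mem_toFinset] at hmem
      apply hvW
      rw [hBV, Finset.mem_biUnion]
      refine ⟨i, hi, ?_⟩
      rw [Set.mem_toFinset]
      exact hmem.2 v hvee
    · intro hc
      have hends := (hP ee hc).1
      rw [hends, Sym2.mem_iff] at hvee
      rcases hvee with h | h
      · exact hvx h
      · apply hvW
        rw [hBV, Finset.mem_biUnion]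
        refine ⟨ee, hc, ?_⟩
        rw [Set.mem_toFinset, h]
        exact G.sideV_self ee (yb ee)
  -- edges at x are never in BE
  have hatxBE : ∀ ee, x ∈ G.ends ee → ee ∉ BE := by
    intro ee hx hc
    rw [hBE, Finset.mem_biUnion] at hc
    obtain ⟨i, hi, hmem⟩ := hc
    rw [Set.mem_toFinset] at hmem
    exact hxfar i hi (hmem.2 x hx)
  have hdegx : G.degIn F₀ x + XB.card = G.degree x := by
    have hsub : (↑XB : Set E) ⊆ {ee | x ∈ G.ends ee} := by
      intro ee hee
      rw [Finset.mem_coe, hXB, Finset.mem_filter] at hee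
      exact hee.2.1
    have h1 : {ee | ee ∈ F₀ ∧ x ∈ G.ends ee} = {ee | x ∈ G.ends ee} \ ↑XB := by
      ext ee
      simp only [Set.mem_setOf_eq, Set.mem_diff, Finset.mem_coe]
      constructor
      · rintro ⟨⟨_, hnX⟩, hx⟩
        exact ⟨hx, hnX⟩
      · rintro ⟨hx, hnX⟩
        exact ⟨⟨hatxBE ee hx, hnX⟩, hx⟩
    have h2 : {ee | ee ∈ F₀ ∧ G.ends ee = s(x, x)} = {ee | G.ends ee = s(x, x)} := by
      ext ee
      simp only [Set.mem_setOf_eq, and_iff_right_iff_imp]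
      intro h
      have hx' : x ∈ G.ends ee := by rw [h]; simp
      refine ⟨hatxBE ee hx', ?_⟩
      intro hc
      have := (hP ee hc).1
      rw [h] at this
      rcases Sym2.eq_iff.1 this with ⟨_, h2'⟩ | ⟨h2', _⟩ <;>
        exact (hP ee hc).2.1 h2'.symm
    have hd1 : ({ee | x ∈ G.ends ee} \ ↑XB).ncard + XB.card = {ee | x ∈ G.ends ee}.ncard := by
      rw [← Set.ncard_coe_finset XB]
      rw [Set.ncard_diff hsub (Set.toFinite _)]
      have hle : (↑XB : Set E).ncard ≤ {ee | x ∈ G.ends ee}.ncard :=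
        Set.ncard_le_ncard hsub (Set.toFinite _)
      omega
    rw [degree, degIn, degIn, Set.sep_univ, Set.sep_univ]
    have hc1 : {ee | ee ∈ F₀ ∧ x ∈ G.ends ee} = {ee ∈ F₀ | x ∈ G.ends ee} := rfl
    have hc2 : {ee | ee ∈ F₀ ∧ G.ends ee = s(x, x)} = {ee ∈ F₀ | G.ends ee = s(x, x)} := rfl
    rw [← hc1, ← hc2, h1, h2]
    omega
  -- counting cards
  have hW₀card : W₀.toFinset.card + BV.card = Fintype.card V := by
    have : W₀.toFinset = Finset.univ \ BV := by
      ext v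
      simp [hW₀]
    rw [this, Finset.card_sdiff_of_subset (Finset.subset_univ _), Finset.card_univ]
    have := Finset.card_le_card (Finset.subset_univ BV)
    rw [Finset.card_univ] at this
    omega
  have hF₀card : F₀.ncard + BE.card + XB.card = Fintype.card E := by
    have hdisj : Disjoint BE XB := by
      rw [Finset.disjoint_right]
      exact fun ee hee => hXBnotBE ee hee
    have : F₀.toFinset = Finset.univ \ (BE ∪ XB) := by
      ext ee
      simp only [Set.mem_toFinset, hF₀, Set.mem_setOf_eq, Finset.mem_sdiff, Finset.mem_univ,
        true_and, Finset.mem_union]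
      tauto
    rw [Set.ncard_eq_toFinset_card', this, Finset.card_sdiff_of_subset (Finset.subset_univ _),
      Finset.card_univ, Finset.card_union_of_disjoint hdisj]
    have := Finset.card_le_card (Finset.subset_univ (BE ∪ XB))
    rw [Finset.card_univ, Finset.card_union_of_disjoint hdisj] at this
    omega
  -- sum over W₀
  have hxWF : x ∈ W₀.toFinset := by rw [Set.mem_toFinset]; exact hxW
  have hsplit := Finset.sum_erase_add W₀.toFinset (G.degIn F₀) hxWF
  have hothers : ∀ v ∈ W₀.toFinset.erase x, 2 ≤ G.degIn F₀ v := by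
    intro v hv
    have hvne : v ≠ x := Finset.ne_of_mem_erase hv
    have hvW : v ∈ W₀ := by
      have := Finset.mem_of_mem_erase hv
      rwa [Set.mem_toFinset] at this
    rw [hfull v hvW hvne]
    exact hdeg v hvne
  have hlower : 2 * (W₀.toFinset.card - 1) ≤ ∑ v ∈ W₀.toFinset.erase x, G.degIn F₀ v := by
    calc 2 * (W₀.toFinset.card - 1) = (W₀.toFinset.erase x).card • 2 := by
          rw [Finset.card_erase_of_mem hxWF, smul_eq_mul]; ring
      _ ≤ _ := Finset.card_nsmul_le_sum _ _ _ hothers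
  -- degree of x bounds the number of edges at x
  have hdegxcard : (Finset.univ.filter (fun ee => x ∈ G.ends ee)).card ≤ G.degree x := by
    have h1 : {ee : E | x ∈ G.ends ee}.ncard
        = (Finset.univ.filter (fun ee => x ∈ G.ends ee)).card := by
      rw [Set.ncard_eq_toFinset_card', Set.toFinset_setOf]
    rw [← h1]
    exact G.ncard_incident_le_degree x
  have hXsplit : XB.card + (Finset.univ.filter (fun ee => x ∈ G.ends ee ∧ ¬ G.IsBridge ee)).card
      = (Finset.univ.filter (fun ee => x ∈ G.ends ee)).card := by
    rw [hXB]
    have e1 : Finset.univ.filter (fun ee => x ∈ G.ends ee ∧ G.IsBridge ee)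
        = (Finset.univ.filter (fun ee => x ∈ G.ends ee)).filter (fun ee => G.IsBridge ee) := by
      rw [Finset.filter_filter]
    have e2 : Finset.univ.filter (fun ee => x ∈ G.ends ee ∧ ¬ G.IsBridge ee)
        = (Finset.univ.filter (fun ee => x ∈ G.ends ee)).filter (fun ee => ¬ G.IsBridge ee) := by
      rw [Finset.filter_filter]
    rw [e1, e2]
    exact Finset.card_filter_add_card_filter_not _
  -- per-bridge genus bound
  have hay : ∀ ee ∈ XB, (G.sideV ee (yb ee)).ncard ≤ (G.sideE ee (yb ee)).ncard := by
    intro ee hee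
    exact G.side_ncard_le (hP ee hee).1 (hP ee hee).2.2 hdeg
  have hsumeq : ∑ ee ∈ XB, (G.sideE ee (yb ee)).ncard + XB.card
      = ∑ ee ∈ XB, (G.sideV ee (yb ee)).ncard
        + ∑ ee ∈ XB, ((G.sideE ee (yb ee)).ncard + 1 - (G.sideV ee (yb ee)).ncard) := by
    have h1 : ∑ ee ∈ XB, ((G.sideE ee (yb ee)).ncard + 1)
        = ∑ ee ∈ XB, ((G.sideV ee (yb ee)).ncard
          + ((G.sideE ee (yb ee)).ncard + 1 - (G.sideV ee (yb ee)).ncard)) :=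
      Finset.sum_congr rfl (fun ee hee => by have := hay ee hee; omega)
    rw [Finset.sum_add_distrib, Finset.sum_add_distrib, Finset.sum_const,
      smul_eq_mul, mul_one] at h1
    exact h1
  have hWpos : 1 ≤ W₀.toFinset.card := Finset.card_pos.2 ⟨x, hxWF⟩
  have hd : (∑ v ∈ W₀.toFinset, G.degIn F₀ v) = 2 * F₀.ncard := by
    convert hHS using 2
    ext v
    simp only [Set.mem_toFinset]
  omega

end Multigraph
namespace Multigraph

theorem mainAux : ∀ (n : ℕ) (V E : Type) (_iV : Fintype V) (_iE : Fintype E)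
    (G : Multigraph V E) (x : V) (g : ℕ),
    Fintype.card E ≤ n → G.Connected → (∀ v, v ≠ x → 2 ≤ G.degree v) →
    Fintype.card E + 1 = Fintype.card V + g →
    (Nat.card {f : G.Aut // f.toV x = x} ≤ 2 ^ g * Nat.factorial g) ∧
    (∀ e, x ∈ G.ends e → ¬ G.IsBridge e →
      1 ≤ g ∧ Nat.card {f : G.Aut // f.toV x = x ∧ f.toE e = e} ≤
        2 ^ (g - 1) * Nat.factorial (g - 1)) := by
  intro n
  induction n using Nat.strongRecOn with
  | ind n ih =>
    intro V E iV iE G x g hE hconn hdeg hbetti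
    have hVpos : 1 ≤ Fintype.card V := Fintype.card_pos_iff.2 hconn.1
    -- ====================== part (ii) ======================
    have part2 : ∀ e, x ∈ G.ends e → ¬ G.IsBridge e →
        1 ≤ g ∧ Nat.card {f : G.Aut // f.toV x = x ∧ f.toE e = e} ≤
          2 ^ (g - 1) * Nat.factorial (g - 1) := by
      intro e hx hnb
      have hconn' := delete_connected hconn hnb
      have hcard' := card_delete (E := E) e
      have hVle := conn_card_le (Fintype.card {e' // e' ≠ e}) V {e' // e' ≠ e}
        inferInstance inferInstance (G.delete e) le_rfl hconn'
      have hg1 : 1 ≤ g := by omega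
      refine ⟨hg1, ?_⟩
      obtain ⟨y, hendsxy⟩ := Sym2.mem_iff_exists.1 hx
      by_cases hxy : x = y
      · -- e is a loop at x : delete it
        rw [← hxy] at hendsxy
        have hdeg' : ∀ v, v ≠ x → 2 ≤ (G.delete e).degree v := by
          intro v hv
          rw [delete_degree_of_not_mem (by
            rw [hendsxy, Sym2.mem_iff]
            rintro (h | h) <;> exact hv h)]
          exact hdeg v hv
        have ihres := (ih (Fintype.card E - 1) (by omega) V {e' // e' ≠ e}
          inferInstance inferInstance (G.delete e) x (g - 1) (by omega) hconn' hdeg'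
          (by omega)).1
        calc Nat.card {f : G.Aut // f.toV x = x ∧ f.toE e = e}
            ≤ Nat.card {f' : (G.delete e).Aut // f'.toV x = x} :=
              Nat.card_le_card_of_injective _ deleteAut_inj
          _ ≤ 2 ^ (g - 1) * Nat.factorial (g - 1) := ihres
      · -- e is not a loop
        have hyx : y ≠ x := fun h => hxy h.symm
        have hy2 : 2 ≤ G.degree y := hdeg y hyx
        by_cases hy3 : 3 ≤ G.degree y
        · -- delete e, y keeps degree ≥ 2
          have hdeg' : ∀ v, v ≠ x → 2 ≤ (G.delete e).degree v := by
            intro v hv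
            by_cases hvy : v = y
            · subst hvy
              have := degree_le_delete_add_one (G := G) (e := e) (v := v) (by
                rw [hendsxy]
                intro hc
                rcases Sym2.eq_iff.1 hc with ⟨h1, _⟩ | ⟨h1, _⟩ <;> exact hxy h1)
              omega
            · rw [delete_degree_of_not_mem (by
                rw [hendsxy, Sym2.mem_iff]
                rintro (h | h)
                · exact hv h
                · exact hvy h)]
              exact hdeg v hv
          have ihres := (ih (Fintype.card E - 1) (by omega) V {e' // e' ≠ e}
            inferInstance inferInstance (G.delete e) x (g - 1) (by omega) hconn' hdeg'
            (by omega)).1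
          calc Nat.card {f : G.Aut // f.toV x = x ∧ f.toE e = e}
              ≤ Nat.card {f' : (G.delete e).Aut // f'.toV x = x} :=
                Nat.card_le_card_of_injective _ deleteAut_inj
            _ ≤ 2 ^ (g - 1) * Nat.factorial (g - 1) := ihres
        · -- degree y = 2 : contract e
          have hdy : G.degree y = 2 := by omega
          have hexists : ∃ e₂, e₂ ≠ e ∧ y ∈ G.ends e₂ := by
            by_contra hc
            push_neg at hc
            have hA : {ee : E | y ∈ G.ends ee} ⊆ {e} := by
              intro ee hee
              by_contra hee'
              exact hc ee (by simpa using hee') hee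
            have hAcard : {ee : E | y ∈ G.ends ee}.ncard ≤ 1 := by
              calc {ee : E | y ∈ G.ends ee}.ncard ≤ ({e} : Set E).ncard :=
                    Set.ncard_le_ncard hA (Set.toFinite _)
                _ = 1 := Set.ncard_singleton e
            have hB : {ee : E | G.ends ee = s(y, y)} = ∅ := by
              ext ee
              simp only [Set.mem_setOf_eq, Set.mem_empty_iff_false, iff_false]
              intro hee
              have : ee ∈ {ee : E | y ∈ G.ends ee} := by
                rw [Set.mem_setOf_eq, hee]; simp
              have : ee = e := hA this
              rw [this, hendsxy] at hee
              rcases Sym2.eq_iff.1 hee with ⟨h1, _⟩ | ⟨h1, _⟩ <;> exact hxy h1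
            have := G.degree_expand y
            rw [hB, Set.ncard_empty] at this
            omega
          obtain ⟨e₂, he₂ne, hye₂⟩ := hexists
          have honly : ∀ ee, y ∈ G.ends ee → ee = e ∨ ee = e₂ := by
            by_contra hc
            push_neg at hc
            obtain ⟨e₃, hy3', hne1, hne2⟩ := hc
            have hsub : {e, e₂, e₃} ⊆ {ee : E | y ∈ G.ends ee} := by
              intro ee hee
              rcases hee with rfl | rfl | rfl
              · rw [Set.mem_setOf_eq, hendsxy]; simp
              · exact hye₂
              · exact hy3'
            have h3 : ({e, e₂, e₃} : Set E).ncard = 3 := by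
              rw [Set.ncard_insert_of_notMem (by
                  simp only [Set.mem_insert_iff, Set.mem_singleton_iff]
                  rintro (h | h)
                  · exact he₂ne h.symm
                  · exact hne1 h.symm) (Set.toFinite _),
                Set.ncard_insert_of_notMem (by
                  simp only [Set.mem_singleton_iff]
                  intro h
                  exact hne2 h.symm) (Set.toFinite _),
                Set.ncard_singleton]
            have hle : 3 ≤ {ee : E | y ∈ G.ends ee}.ncard := by
              rw [← h3]
              exact Set.ncard_le_ncard hsub (Set.toFinite _)
            have := G.degree_expand y
            omega
          have hB2 : ∀ ee, G.ends ee ≠ s(y, y) := by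
            intro ee hee
            have hyee : y ∈ G.ends ee := by rw [hee]; simp
            have h2le : 2 ≤ {ee : E | y ∈ G.ends ee}.ncard := by
              have hsub : {e, e₂} ⊆ {ee : E | y ∈ G.ends ee} := by
                intro a ha
                rcases ha with rfl | rfl
                · rw [Set.mem_setOf_eq, hendsxy]; simp
                · exact hye₂
              have hp : ({e, e₂} : Set E).ncard = 2 := by
                rw [Set.ncard_insert_of_notMem (by
                    simp only [Set.mem_singleton_iff]
                    exact fun h => he₂ne h.symm) (Set.toFinite _), Set.ncard_singleton]
              rw [← hp]
              exact Set.ncard_le_ncard hsub (Set.toFinite _)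
            have h1le : 0 < {ee : E | G.ends ee = s(y, y)}.ncard :=
              (Set.ncard_pos (Set.toFinite _)).2 ⟨ee, hee⟩
            have := G.degree_expand y
            omega
          obtain ⟨y₂, hendse₂⟩ := Sym2.mem_iff_exists.1 hye₂
          have hy₂y : y₂ ≠ y := fun hc => hB2 e₂ (by rw [hendse₂, hc])
          have hne : x ≠ y := hxy
          -- the contracted graph
          have hconnc := contract_connected (hne := hne) hconn hendsxy
          have hcends₂ : (G.contract e x y hne).ends ⟨e₂, he₂ne⟩
              = s(⟨x, hne⟩, ctr x y hne y₂) := by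
            show (G.ends e₂).map _ = _
            rw [hendse₂, Sym2.map_pair_eq, ctr_y hne]
          have hxmem : (⟨x, hne⟩ : {v // v ≠ y}) ∈ (G.contract e x y hne).ends ⟨e₂, he₂ne⟩ := by
            rw [hcends₂]
            exact Sym2.mem_mk_left _ _
          have hreach : Relation.ReflTransGen (G.AdjOff {e}) x y :=
            not_isBridge_reach hnb x y hendsxy
          have hreach2 := reach_avoid_two hendse₂ hy₂y honly hne hreach
          have hnb' : ¬ (G.contract e x y hne).IsBridge ⟨e₂, he₂ne⟩ :=
            contract_not_bridge he₂ne hendse₂ hreach2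
          have hdegc : ∀ v', v' ≠ (⟨x, hne⟩ : {v // v ≠ y}) →
              2 ≤ (G.contract e x y hne).degree v' := by
            rintro ⟨v, hvy⟩ hvne
            have hvx : v ≠ x := fun hc => hvne (Subtype.ext hc)
            rw [contract_degree hendsxy hvy hvx]
            exact hdeg v hvx
          have hcV := contract_card_V (V := V) (y := y)
          have ihc := (ih (Fintype.card E - 1) (by omega) {v // v ≠ y} {e' // e' ≠ e}
            inferInstance inferInstance (G.contract e x y hne) ⟨x, hne⟩ g
            (by omega) hconnc hdegc (by omega)).2 ⟨e₂, he₂ne⟩ hxmem hnb'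
          -- inject the stabilizer into the contracted stabilizer
          have hinj : Function.Injective
              (fun (fp : {f : G.Aut // f.toV x = x ∧ f.toE e = e}) =>
                (⟨Aut.contractAut (hne := hne) fp.val fp.prop.1
                    (aut_fix_other hendsxy hne fp.prop.1 fp.prop.2) fp.prop.2,
                  Subtype.ext fp.prop.1,
                  Subtype.ext (by
                    have hfy := aut_fix_other hendsxy hne fp.prop.1 fp.prop.2
                    have hymem : fp.val.toV y ∈ G.ends (fp.val.toE e₂) := fp.val.mem_ends hye₂
                    rw [hfy] at hymem
                    rcases honly _ hymem with h' | h'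
                    · exact absurd (fp.val.toE.injective (h'.trans fp.prop.2.symm)) he₂ne
                    · exact h')⟩ :
                  {f' : (G.contract e x y hne).Aut //
                    f'.toV ⟨x, hne⟩ = ⟨x, hne⟩ ∧ f'.toE ⟨e₂, he₂ne⟩ = ⟨e₂, he₂ne⟩})) := by
            rintro ⟨f1, hf1⟩ ⟨f2, hf2⟩ heq
            simp only [Subtype.mk.injEq] at heq ⊢
            apply Aut.ext'
            · ext v
              by_cases hvy : v = y
              · rw [hvy, aut_fix_other hendsxy hne hf1.1 hf1.2,
                  aut_fix_other hendsxy hne hf2.1 hf2.2]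
              · exact congrArg (fun (q : (G.contract e x y hne).Aut) =>
                  (q.toV ⟨v, hvy⟩).val) heq
            · ext ee
              by_cases hc : ee = e
              · rw [hc, hf1.2, hf2.2]
              · exact congrArg (fun (q : (G.contract e x y hne).Aut) =>
                  (q.toE ⟨ee, hc⟩).val) heq
          calc Nat.card {f : G.Aut // f.toV x = x ∧ f.toE e = e}
              ≤ Nat.card {f' : (G.contract e x y hne).Aut //
                  f'.toV ⟨x, hne⟩ = ⟨x, hne⟩ ∧ f'.toE ⟨e₂, he₂ne⟩ = ⟨e₂, he₂ne⟩} :=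
                Nat.card_le_card_of_injective _ hinj
            _ ≤ 2 ^ (g - 1) * Nat.factorial (g - 1) := ihc.2
    refine ⟨?_, part2⟩
    -- ====================== part (i) ======================
    by_cases hE0 : Fintype.card E = 0
    · -- no edges at all
      have hempty : IsEmpty E := Fintype.card_eq_zero_iff.1 hE0
      have hsingV : Subsingleton V :=
        ⟨fun u v => reach_eq_of_isEmpty hempty (hconn.2 u v)⟩
      have hg0 : g = 0 := by
        have := Fintype.card_le_one_iff_subsingleton.2 hsingV
        omega
      have hsub : Subsingleton {f : G.Aut // f.toV x = x} := by
        constructor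
        rintro ⟨f1, _⟩ ⟨f2, _⟩
        apply Subtype.ext
        apply Aut.ext'
        · ext v; exact Subsingleton.elim _ _
        · ext ee; exact hempty.elim ee
      have : Fintype {f : G.Aut // f.toV x = x} := Fintype.ofFinite _
      rw [Nat.card_eq_fintype_card, hg0]
      have := Fintype.card_le_one_iff_subsingleton.2 hsub
      simpa using this
    · -- at least one edge
      have hEne : Nonempty E := Fintype.card_pos_iff.1 (by omega)
      obtain ⟨e₀, he₀x⟩ := exists_edge_at hconn x hEne
      have hdegx1 : 1 ≤ G.degree x := by
        have h1 : 0 < {ee : E | x ∈ G.ends ee}.ncard :=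
          (Set.ncard_pos (Set.toFinite _)).2 ⟨e₀, he₀x⟩
        have := G.ncard_incident_le_degree x
        omega
      have hdrle := G.degree_root_le x hdeg
      have hg1 : 1 ≤ g := by omega
      -- choose the far endpoint of each bridge at x
      have hsel : ∀ ef : E, ∃ yy : V, x ∈ G.ends ef → G.IsBridge ef →
          G.ends ef = s(x, yy) ∧ yy ≠ x ∧
            ¬ Relation.ReflTransGen (G.AdjOff {ef}) x yy := by
        intro ef
        by_cases hc : x ∈ G.ends ef ∧ G.IsBridge ef
        · obtain ⟨yy, h1, h2, h3⟩ := bridge_other hc.2 hc.1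
          exact ⟨yy, fun _ _ => ⟨h1, h2, h3⟩⟩
        · exact ⟨x, fun h1 h2 => absurd ⟨h1, h2⟩ hc⟩
      choose yb hyb using hsel
      set ay : E → ℕ := fun ef =>
        (G.sideE ef (yb ef)).ncard + 1 - (G.sideV ef (yb ef)).ncard with hay
      have hkey : (Finset.univ.filter (fun ef => x ∈ G.ends ef ∧ ¬ G.IsBridge ef)).card
          + 2 * ∑ ef ∈ Finset.univ.filter (fun ef => x ∈ G.ends ef ∧ G.IsBridge ef), ay ef
          ≤ 2 * g :=
        G.key_count x g hconn hdeg hbetti yb (fun ee h1 h2 => hyb ee h1 h2)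
      set bound : {ee : E // x ∈ G.ends ee} → ℕ := fun ee =>
        if G.IsBridge ee.val then 2 ^ g * (ay ee.val * Nat.factorial (g - 1))
        else 2 ^ (g - 1) * Nat.factorial (g - 1) with hbound
      have hF : ∀ fp : {f : G.Aut // f.toV x = x}, x ∈ G.ends (fp.val.toE e₀) := by
        intro fp
        have := fp.val.mem_ends he₀x
        rwa [fp.prop] at this
      have hfiber : ∀ ee : {ee : E // x ∈ G.ends ee},
          Nat.card {fp : {f : G.Aut // f.toV x = x} //
            (⟨fp.val.toE e₀, hF fp⟩ : {ee : E // x ∈ G.ends ee}) = ee} ≤ bound ee := by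
        intro ee
        set c : G.Aut := Classical.epsilon
          (fun f' : G.Aut => f'.toV x = x ∧ f'.toE e₀ = ee.val) with hc
        have hstab : Nat.card {fp : {f : G.Aut // f.toV x = x} //
              (⟨fp.val.toE e₀, hF fp⟩ : {ee : E // x ∈ G.ends ee}) = ee}
            ≤ Nat.card {f : G.Aut // f.toV x = x ∧ f.toE ee.val = ee.val} := by
          have hmap : ∀ (fp : {fp : {f : G.Aut // f.toV x = x} //
                (⟨fp.val.toE e₀, hF fp⟩ : {ee : E // x ∈ G.ends ee}) = ee}),
              (fp.val.val.comp c.inv).toV x = x ∧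
                (fp.val.val.comp c.inv).toE ee.val = ee.val := by
            intro fp
            have hfe : fp.val.val.toE e₀ = ee.val := congrArg Subtype.val fp.prop
            have hspec := Classical.epsilon_spec (⟨fp.val.val, fp.val.prop, hfe⟩ :
              ∃ f' : G.Aut, f'.toV x = x ∧ f'.toE e₀ = ee.val)
            rw [← hc] at hspec
            constructor
            · show fp.val.val.toV (c.toV.symm x) = x
              rw [aut_fixV_symm hspec.1, fp.val.prop]
            · show fp.val.val.toE (c.toE.symm ee.val) = ee.val
              rw [(Equiv.symm_apply_eq _).2 hspec.2.symm, hfe]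
          refine Nat.card_le_card_of_injective
            (fun fp => ⟨fp.val.val.comp c.inv, hmap fp⟩) ?_
          rintro ⟨⟨f1, h1⟩, hh1⟩ ⟨⟨f2, h2⟩, hh2⟩ heq
          simp only [Subtype.mk.injEq] at heq ⊢
          exact Aut.comp_right_cancel heq
        rw [hbound]
        by_cases hbr : G.IsBridge ee.val
        · simp only [hbr, if_true]
          obtain ⟨hendse, hyxe, hbre⟩ := hyb ee.val ee.prop hbr
          have hsplit := split_card_le hconn hendse hbre
          have hends' : G.ends ee.val = s(yb ee.val, x) := by rw [hendse, Sym2.eq_swap]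
          have hbre' : ¬ Relation.ReflTransGen (G.AdjOff {ee.val}) (yb ee.val) x :=
            fun h => hbre (reachOff_symm h)
          have hVsplit := G.sideV_card hconn hendse hbre
          have hEsplit := G.sideE_card hconn hendse hbre
          have hVxle := conn_card_le (Fintype.card {ef // ef ∈ G.sideE ee.val x}) _ _
            inferInstance inferInstance (G.sideG ee.val x) le_rfl G.sideG_connected
          have hVyle := conn_card_le (Fintype.card {ef // ef ∈ G.sideE ee.val (yb ee.val)}) _ _
            inferInstance inferInstance (G.sideG ee.val (yb ee.val)) le_rfl G.sideG_connected
          set gx := Fintype.card {ef // ef ∈ G.sideE ee.val x} + 1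
            - Fintype.card {v // v ∈ G.sideV ee.val x} with hgx
          set gy := Fintype.card {ef // ef ∈ G.sideE ee.val (yb ee.val)} + 1
            - Fintype.card {v // v ∈ G.sideV ee.val (yb ee.val)} with hgy
          have hgxeq : Fintype.card {ef // ef ∈ G.sideE ee.val x} + 1
              = Fintype.card {v // v ∈ G.sideV ee.val x} + gx := by omega
          have hgyeq : Fintype.card {ef // ef ∈ G.sideE ee.val (yb ee.val)} + 1
              = Fintype.card {v // v ∈ G.sideV ee.val (yb ee.val)} + gy := by omega
          have hgsum : gx + gy = g := by omega
          have hdegGx : ∀ v', v' ≠ (⟨x, G.sideV_self ee.val x⟩ :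
              {v // v ∈ G.sideV ee.val x}) → 2 ≤ (G.sideG ee.val x).degree v' := by
            rintro ⟨v, hv⟩ hvne
            have hvx : v ≠ x := fun hc => hvne (Subtype.ext hc)
            rw [G.sideG_restrict_degree hv, G.sideG_degree hendse hbre hv hvx]
            exact hdeg v hvx
          have hdegGy : ∀ v', v' ≠ (⟨yb ee.val, G.sideV_self ee.val (yb ee.val)⟩ :
              {v // v ∈ G.sideV ee.val (yb ee.val)}) →
              2 ≤ (G.sideG ee.val (yb ee.val)).degree v' := by
            rintro ⟨v, hv⟩ hvne
            have hvy : v ≠ yb ee.val := fun hc => hvne (Subtype.ext hc)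
            have hvx : v ≠ x := fun hc =>
              G.sideV_disj hbre (hc ▸ G.sideV_self ee.val x) hv
            rw [G.sideG_restrict_degree hv, G.sideG_degree hends' hbre' hv hvy]
            exact hdeg v hvx
          have ihx := (ih (Fintype.card {ef // ef ∈ G.sideE ee.val x}) (by omega) _ _
            inferInstance inferInstance (G.sideG ee.val x) ⟨x, G.sideV_self ee.val x⟩ gx
            le_rfl G.sideG_connected hdegGx hgxeq).1
          have ihy := (ih (Fintype.card {ef // ef ∈ G.sideE ee.val (yb ee.val)}) (by omega) _ _
            inferInstance inferInstance (G.sideG ee.val (yb ee.val))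
            ⟨yb ee.val, G.sideV_self ee.val (yb ee.val)⟩ gy
            le_rfl G.sideG_connected hdegGy hgyeq).1
          have hnc1 : Fintype.card {ef // ef ∈ G.sideE ee.val (yb ee.val)}
              = (G.sideE ee.val (yb ee.val)).ncard := by
            rw [← Nat.card_eq_fintype_card, ncard_coe_subtype]
          have hnc2 : Fintype.card {v // v ∈ G.sideV ee.val (yb ee.val)}
              = (G.sideV ee.val (yb ee.val)).ncard := by
            rw [← Nat.card_eq_fintype_card]
            exact Nat.card_coe_set_eq _
          have hncle := G.side_ncard_le hendse hbre hdeg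
          have hgya : gy = ay ee.val := by simp only [hay]; omega
          have hgy1 : 1 ≤ gy := by omega
          calc Nat.card {fp : {f : G.Aut // f.toV x = x} //
                (⟨fp.val.toE e₀, hF fp⟩ : {ee : E // x ∈ G.ends ee}) = ee}
              ≤ Nat.card {f : G.Aut // f.toV x = x ∧ f.toE ee.val = ee.val} := hstab
            _ ≤ Nat.card {fx : (G.sideG ee.val x).Aut //
                  fx.toV ⟨x, G.sideV_self ee.val x⟩ = ⟨x, G.sideV_self ee.val x⟩} *
                Nat.card {fy : (G.sideG ee.val (yb ee.val)).Aut //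
                  fy.toV ⟨yb ee.val, G.sideV_self ee.val (yb ee.val)⟩
                    = ⟨yb ee.val, G.sideV_self ee.val (yb ee.val)⟩} := hsplit
            _ ≤ (2 ^ gx * Nat.factorial gx) * (2 ^ gy * Nat.factorial gy) :=
                Nat.mul_le_mul ihx ihy
            _ ≤ 2 ^ g * (ay ee.val * Nat.factorial (g - 1)) := by
                rw [← hgsum, ← hgya]
                have harr : 2 ^ gx * Nat.factorial gx * (2 ^ gy * Nat.factorial gy)
                    = 2 ^ (gx + gy) * (Nat.factorial gx * Nat.factorial gy) := by
                  rw [pow_add]; ring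
                rw [harr]
                have hsub1 : gx + gy - 1 = gx + gy - 1 := rfl
                apply Nat.mul_le_mul_left
                exact factorial_helper hgy1
        · simp only [hbr, if_false]
          exact le_trans hstab (part2 ee.val ee.prop hbr).2
      have htotal := card_fiber_bound
        (fun fp : {f : G.Aut // f.toV x = x} =>
          (⟨fp.val.toE e₀, hF fp⟩ : {ee : E // x ∈ G.ends ee})) bound hfiber
      -- evaluate the sum of the bounds
      have hsum1 : ∑ ee : {ee : E // x ∈ G.ends ee}, bound ee
          = ∑ ef ∈ Finset.univ.filter (fun ef => x ∈ G.ends ef),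
              (if G.IsBridge ef then 2 ^ g * (ay ef * Nat.factorial (g - 1))
                else 2 ^ (g - 1) * Nat.factorial (g - 1)) := by
        rw [hbound]
        exact (Finset.sum_subtype (Finset.univ.filter (fun ef => x ∈ G.ends ef))
          (fun ef => by simp) (fun ef => if G.IsBridge ef
            then 2 ^ g * (ay ef * Nat.factorial (g - 1))
            else 2 ^ (g - 1) * Nat.factorial (g - 1))).symm
      have hsum2 : ∑ ef ∈ Finset.univ.filter (fun ef => x ∈ G.ends ef),
              (if G.IsBridge ef then 2 ^ g * (ay ef * Nat.factorial (g - 1))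
                else 2 ^ (g - 1) * Nat.factorial (g - 1))
          = (∑ ef ∈ Finset.univ.filter (fun ef => x ∈ G.ends ef ∧ G.IsBridge ef),
              2 ^ g * (ay ef * Nat.factorial (g - 1)))
            + (Finset.univ.filter (fun ef => x ∈ G.ends ef ∧ ¬ G.IsBridge ef)).card
              * (2 ^ (g - 1) * Nat.factorial (g - 1)) := by
        rw [← Finset.sum_filter_add_sum_filter_not
          (Finset.univ.filter (fun ef => x ∈ G.ends ef)) (fun ef => G.IsBridge ef)]
        congr 1
        · rw [Finset.filter_filter]
          exact Finset.sum_congr rfl (fun ef hef =>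
            if_pos (Finset.mem_filter.1 hef).2.2)
        · rw [Finset.filter_filter]
          rw [Finset.sum_congr rfl (fun ef hef =>
            if_neg (Finset.mem_filter.1 hef).2.2), Finset.sum_const, smul_eq_mul]
      have hsum3 : (∑ ef ∈ Finset.univ.filter (fun ef => x ∈ G.ends ef ∧ G.IsBridge ef),
              2 ^ g * (ay ef * Nat.factorial (g - 1)))
          = (2 ^ g * Nat.factorial (g - 1)) *
            (∑ ef ∈ Finset.univ.filter (fun ef => x ∈ G.ends ef ∧ G.IsBridge ef), ay ef) := by
        rw [Finset.mul_sum]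
        exact Finset.sum_congr rfl (fun ef _ => by ring)
      have h2g : (2 : ℕ) ^ g = 2 * 2 ^ (g - 1) := by
        conv_lhs => rw [show g = (g - 1) + 1 by omega]
        rw [pow_succ]
        ring
      have hfac : Nat.factorial g = g * Nat.factorial (g - 1) := by
        conv_lhs => rw [show g = (g - 1) + 1 by omega]
        rw [Nat.factorial_succ]
        congr 1
        omega
      calc Nat.card {f : G.Aut // f.toV x = x}
          ≤ ∑ ee : {ee : E // x ∈ G.ends ee}, bound ee := htotal
        _ = (2 ^ g * Nat.factorial (g - 1)) *
              (∑ ef ∈ Finset.univ.filter (fun ef => x ∈ G.ends ef ∧ G.IsBridge ef), ay ef)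
            + (Finset.univ.filter (fun ef => x ∈ G.ends ef ∧ ¬ G.IsBridge ef)).card
              * (2 ^ (g - 1) * Nat.factorial (g - 1)) := by
            rw [hsum1, hsum2, hsum3]
        _ = (2 ^ (g - 1) * Nat.factorial (g - 1)) *
              (2 * (∑ ef ∈ Finset.univ.filter (fun ef => x ∈ G.ends ef ∧ G.IsBridge ef), ay ef)
                + (Finset.univ.filter (fun ef => x ∈ G.ends ef ∧ ¬ G.IsBridge ef)).card) := by
            rw [h2g]; ring
        _ ≤ (2 ^ (g - 1) * Nat.factorial (g - 1)) * (2 * g) := by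
            apply Nat.mul_le_mul_left
            omega
        _ = 2 ^ g * Nat.factorial g := by
            rw [h2g, hfac]; ring

end Multigraph

/-- Let `G` be a connected leafless graph of Betti number `g ≥ 0`
and `x` a vertex of `G`.  Then the number of automorphisms of `G` fixing `x`
is at most `2^g · g!`. -/
theorem aut_fixing_vertex_card_le {V E : Type} [Fintype V] [Fintype E]
    (G : Multigraph V E) (g : ℕ)
    (hconn : G.Connected) (hleaf : G.Leafless)
    (hbetti : Fintype.card E + 1 = Fintype.card V + g) (x : V) :
    Nat.card {f : G.Aut // f.toV x = x} ≤ 2 ^ g * Nat.factorial g :=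
  (Multigraph.mainAux (Fintype.card E) V E inferInstance inferInstance G x g le_rfl
    hconn (fun v _ => hleaf v) hbetti).1
end
end

section
/- Let G be a connected leafless graph with no bridges, of Betti number g ≥ 1, and let x be a vertex of G. Let G ∖ {x} = U_1 ⊔ ⋯ ⊔ U_k be the decomposition into connected components, let G_i be the subgraph U_i ∪ {x} of G (consisting of U_i together with x and all edges between x and U_i as well as loops at x assigned appropriately), and let g_i be the Betti number of G_i. Then g = g_1 + ⋯ + g_k, each g_i ≥ 1, and each G_i is leafless. -/
private lemma sym2_exists' {α : Type} (s : Sym2 α) : ∃ a b, s = s(a, b) :=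
  Sym2.inductionOn s fun a b => ⟨a, b, rfl⟩

open Finset in
private lemma sym2_two' {α : Type} [Fintype α] [DecidableEq α] (s : Sym2 α) :
    (univ.filter (· ∈ s)).card + (univ.filter (fun v => s = s(v, v))).card = 2 := by
  induction s using Sym2.inductionOn with
  | _ a b =>
    by_cases hab : a = b
    · subst hab
      have h1 : univ.filter (· ∈ s(a, a)) = {a} := by
        ext v; simp [Sym2.mem_iff]
      have h2 : univ.filter (fun v => s(a, a) = s(v, v)) = {a} := by
        ext v; simp [Sym2.eq_iff]; tauto
      rw [h1, h2]; simp
    · have h1 : univ.filter (· ∈ s(a, b)) = {a, b} := by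
        ext v; simp [Sym2.mem_iff]
      have h2 : univ.filter (fun v => s(a, b) = s(v, v)) = ∅ := by
        ext v; simp [Sym2.eq_iff]; intro h h'; exact absurd (h.trans h'.symm) hab
      rw [h1, h2]
      simp [card_insert_of_notMem, hab]

private lemma sum_degIn_eq' {V E : Type} [Fintype V] [Fintype E] (G : Multigraph V E)
    (F : Set E) : ∑ v : V, G.degIn F v = 2 * F.ncard := by
  classical
  set Fs := (Set.toFinite F).toFinset with hFs
  have key : ∀ (P : E → Prop), {e ∈ F | P e}.ncard = (Fs.filter (fun e => P e)).card := by
    intro P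
    rw [show {e ∈ F | P e} = ↑(Fs.filter fun e => P e) by
      ext e; simp only [Set.mem_setOf_eq, Finset.coe_filter, hFs, Set.Finite.mem_toFinset]]
    exact Set.ncard_coe_finset _
  have hdeg : ∀ v, G.degIn F v =
      (Fs.filter (fun e => v ∈ G.ends e)).card +
      (Fs.filter (fun e => G.ends e = s(v, v))).card := by
    intro v; unfold Multigraph.degIn; rw [key, key]; congr 1 <;> congr 1 <;> exact Finset.filter_congr_decidable _ _ _
  calc ∑ v : V, G.degIn F v
      = ∑ v : V, ∑ e ∈ Fs, ((if v ∈ G.ends e then 1 else 0) +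
          if G.ends e = s(v, v) then 1 else 0) := by
        refine Finset.sum_congr rfl fun v _ => ?_
        rw [hdeg, Finset.sum_add_distrib, Finset.card_filter, Finset.card_filter]
    _ = ∑ e ∈ Fs, ∑ v : V, ((if v ∈ G.ends e then 1 else 0) +
          if G.ends e = s(v, v) then 1 else 0) := Finset.sum_comm
    _ = ∑ e ∈ Fs, 2 := by
        refine Finset.sum_congr rfl fun e _ => ?_
        rw [Finset.sum_add_distrib, ← Finset.card_filter, ← Finset.card_filter]
        exact sym2_two' (G.ends e)
    _ = 2 * F.ncard := by
        rw [Finset.sum_const, smul_eq_mul, mul_comm, Set.ncard_eq_toFinset_card F (Set.toFinite F)]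


/-- Let `G` be a connected leafless graph with no bridges, of Betti
number `g ≥ 1`, and let `x` be a vertex of `G`.  Let `G ∖ {x} = U_1 ⊔ ⋯ ⊔ U_k` be the
decomposition into connected components, and for each `i` let `G_i` be the subgraph of `G`
with vertex set `U_i ∪ {x}`, whose edges are those edges of `G` with an endpoint in `U_i`
together with the loops at `x` assigned to the index `i` (by a given assignment
`loopAssign` of the loops at `x` to indices).  Let `g_i` be the Betti number of `G_i`.
Then `g = g_1 + ⋯ + g_k`, each `g_i ≥ 1`, and each `G_i` is leafless. -/
theorem betti_decomposition_at_vertex {V E : Type} [Fintype V] [Fintype E]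
    (G : Multigraph V E) (g : ℕ) (hg : 1 ≤ g)
    (hconn : G.Connected) (hleaf : G.Leafless)
    (hbridgeless : ∀ e, ¬ G.IsBridge e)
    (hbetti : Fintype.card E + 1 = Fintype.card V + g)
    (x : V) (k : ℕ) (U : Fin k → Set V)
    -- each `U i` is a connected component of `G ∖ {x}` …
    (hcomp : ∀ i, ∃ v, v ≠ x ∧
      U i = {w | w ≠ x ∧ Relation.ReflTransGen (G.AdjOffV x) v w})
    -- … and every vertex of `G ∖ {x}` lies in exactly one `U i`
    (hcover : ∀ v, v ≠ x → ∃! i, v ∈ U i)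
    -- an assignment of the loops at `x` to the components
    (loopAssign : ∀ e, G.ends e = s(x, x) → Fin k) :
    ∃ gs : Fin k → ℕ,
      (∀ i, ({e | (∃ v ∈ U i, v ∈ G.ends e) ∨
            ∃ h : G.ends e = s(x, x), loopAssign e h = i} : Set E).ncard + 1 =
          (U i ∪ {x} : Set V).ncard + gs i) ∧
      (∀ i, 1 ≤ gs i) ∧
      (∑ i, gs i) = g ∧
      (∀ i, ∀ v ∈ (U i ∪ {x} : Set V),
        2 ≤ G.degIn {e | (∃ v ∈ U i, v ∈ G.ends e) ∨
          ∃ h : G.ends e = s(x, x), loopAssign e h = i} v) := by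
  
  classical
  set Ei : Fin k → Set E := fun i =>
    {e | (∃ v ∈ U i, v ∈ G.ends e) ∨ ∃ h : G.ends e = s(x, x), loopAssign e h = i} with hEi
  -- members of U i are ≠ x
  have hUne : ∀ i, ∀ v ∈ U i, v ≠ x := by
    intro i v hv
    obtain ⟨v0, hv0, hU⟩ := hcomp i
    rw [hU] at hv; exact hv.1
  have hxU : ∀ i, x ∉ U i := fun i hx => (hUne i x hx) rfl
  -- components are closed under adjacency off x
  have hclosed : ∀ i, ∀ u ∈ U i, ∀ w, w ≠ x → G.Adj u w → w ∈ U i := by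
    intro i u hu w hw hadj
    obtain ⟨v0, hv0, hU⟩ := hcomp i
    rw [hU] at hu ⊢
    exact ⟨hw, hu.2.tail ⟨hu.1, hw, hadj⟩⟩
  -- cardinality of U i ∪ {x}
  have hVi : ∀ i, (U i ∪ {x} : Set V).ncard = (U i).ncard + 1 := by
    intro i
    rw [Set.union_singleton, Set.ncard_insert_of_notMem (hxU i) (Set.toFinite _)]
  -- walk extraction: a walk from a vertex of U i to x avoiding F yields an edge
  -- from U i to x not in F
  have hwalk : ∀ (i : Fin k) (F : Set E) (u : V),
      Relation.ReflTransGen (G.AdjOff F) u x → u ∈ U i →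
      ∃ e, e ∉ F ∧ ∃ w ∈ U i, G.ends e = s(w, x) := by
    intro i F u hw
    induction hw using Relation.ReflTransGen.head_induction_on with
    | refl => intro hu; exact absurd rfl (hUne i x hu)
    | head h' _ ih =>
      rename_i a c _
      intro ha
      obtain ⟨e, heF, hends⟩ := h'
      by_cases hc : c = x
      · subst hc; exact ⟨e, heF, a, ha, hends⟩
      · exact ih (hclosed i a ha c hc ⟨e, hends⟩)
  -- every edge lies in some Ei
  have hEcover : ∀ e : E, ∃ i, e ∈ Ei i := by
    intro e
    by_cases h : ∃ v, v ≠ x ∧ v ∈ G.ends e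
    · obtain ⟨v, hvx, hve⟩ := h
      obtain ⟨i, hi, -⟩ := hcover v hvx
      exact ⟨i, Or.inl ⟨v, hi, hve⟩⟩
    · push_neg at h
      obtain ⟨a, b, hab⟩ := sym2_exists' (G.ends e)
      have hax : a = x := by
        by_contra hax; exact h a hax (by rw [hab]; exact Sym2.mem_mk_left a b)
      have hbx : b = x := by
        by_contra hbx; exact h b hbx (by rw [hab]; exact Sym2.mem_mk_right a b)
      subst hax; subst hbx
      exact ⟨loopAssign e hab, Or.inr ⟨hab, rfl⟩⟩
  -- the Ei are pairwise disjoint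
  have hEdisj : ∀ (e : E) (i j : Fin k), e ∈ Ei i → e ∈ Ei j → i = j := by
    intro e i j hi hj
    rcases hi with ⟨v, hv, hve⟩ | ⟨h1, hi⟩
    · rcases hj with ⟨w, hw, hwe⟩ | ⟨h2, hj⟩
      · -- two endpoints in U i, U j
        obtain ⟨a, b, hab⟩ := sym2_exists' (G.ends e)
        rw [hab, Sym2.mem_iff] at hve hwe
        have hadj : v = w ∨ G.Adj v w := by
          rcases hve with rfl | rfl <;> rcases hwe with rfl | rfl
          · exact Or.inl rfl
          · exact Or.inr ⟨e, hab⟩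
          · exact Or.inr ⟨e, by rw [hab, Sym2.eq_swap]⟩
          · exact Or.inl rfl
        rcases hadj with rfl | hadj
        · obtain ⟨i0, -, huniq⟩ := hcover v (hUne i v hv)
          rw [huniq i hv, huniq j hw]
        · have hw' : w ∈ U i := hclosed i v hv w (hUne j w hw) hadj
          obtain ⟨i0, -, huniq⟩ := hcover w (hUne j w hw)
          rw [huniq i hw', huniq j hw]
      · -- endpoint in U i but e is a loop at x
        rw [h2, Sym2.mem_iff] at hve
        rcases hve with rfl | rfl <;> exact absurd rfl (hUne i v hv)
    · rcases hj with ⟨w, hw, hwe⟩ | ⟨h2, hj⟩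
      · rw [h1, Sym2.mem_iff] at hwe
        rcases hwe with rfl | rfl <;> exact absurd rfl (hUne j w hw)
      · rw [← hi, ← hj]
  -- edge count
  have hE : Fintype.card E = ∑ i, (Ei i).ncard := by
    have huniv : (Finset.univ : Finset E)
        = Finset.univ.biUnion (fun i => (Set.toFinite (Ei i)).toFinset) := by
      ext e
      refine ⟨fun _ => ?_, fun _ => Finset.mem_univ e⟩
      obtain ⟨i, hi⟩ := hEcover e
      exact Finset.mem_biUnion.mpr ⟨i, Finset.mem_univ i, (Set.Finite.mem_toFinset _).mpr hi⟩
    rw [← Finset.card_univ, huniv, Finset.card_biUnion]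
    · exact Finset.sum_congr rfl fun i _ =>
        (Set.ncard_eq_toFinset_card (Ei i) (Set.toFinite _)).symm
    · intro i _ j _ hij
      rw [Function.onFun, Finset.disjoint_left]
      intro e he1 he2
      rw [Set.Finite.mem_toFinset] at he1 he2
      exact hij (hEdisj e i j he1 he2)
  -- vertex count
  have hV : Fintype.card V = 1 + ∑ i, (U i).ncard := by
    have h1 : (Finset.univ : Finset V) = insert x (Finset.univ.filter (· ≠ x)) := by
      ext v
      simp only [Finset.mem_univ, Finset.mem_insert, Finset.mem_filter, true_iff, true_and]
      by_cases hv : v = x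
      · exact Or.inl hv
      · exact Or.inr hv
    have h2 : (Finset.univ.filter (· ≠ x))
        = Finset.univ.biUnion (fun i => (Set.toFinite (U i)).toFinset) := by
      ext v
      constructor
      · intro hv
        rw [Finset.mem_filter] at hv
        obtain ⟨i, hi, -⟩ := hcover v hv.2
        exact Finset.mem_biUnion.mpr ⟨i, Finset.mem_univ i, (Set.Finite.mem_toFinset _).mpr hi⟩
      · intro hv
        obtain ⟨i, -, hi⟩ := Finset.mem_biUnion.mp hv
        rw [Set.Finite.mem_toFinset] at hi
        exact Finset.mem_filter.mpr ⟨Finset.mem_univ v, hUne i v hi⟩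
    rw [← Finset.card_univ, h1, Finset.card_insert_of_notMem (by simp), h2,
      Finset.card_biUnion]
    · rw [Nat.add_comm]
      congr 1
      exact Finset.sum_congr rfl fun i _ =>
        (Set.ncard_eq_toFinset_card (U i) (Set.toFinite _)).symm
    · intro i _ j _ hij
      rw [Function.onFun, Finset.disjoint_left]
      intro v hv1 hv2
      rw [Set.Finite.mem_toFinset] at hv1 hv2
      obtain ⟨i0, -, huniq⟩ := hcover v (hUne i v hv1)
      exact hij ((huniq i hv1).trans (huniq j hv2).symm)
  -- leaflessness of each G_i
  have hleafi : ∀ i, ∀ v ∈ (U i ∪ {x} : Set V), 2 ≤ G.degIn (Ei i) v := by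
    intro i v hv
    rcases hv with hv | hv
    · -- v ∈ U i
      have h1 : {e ∈ Ei i | v ∈ G.ends e} = {e ∈ Set.univ | v ∈ G.ends e} := by
        ext e
        simp only [Set.mem_setOf_eq, Set.mem_univ, true_and]
        exact ⟨fun h => h.2, fun h => ⟨Or.inl ⟨v, hv, h⟩, h⟩⟩
      have h2 : {e ∈ Ei i | G.ends e = s(v, v)} = {e ∈ Set.univ | G.ends e = s(v, v)} := by
        ext e
        simp only [Set.mem_setOf_eq, Set.mem_univ, true_and]
        refine ⟨fun h => h.2, fun h => ⟨Or.inl ⟨v, hv, ?_⟩, h⟩⟩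
        rw [h]; exact Sym2.mem_mk_left v v
      have : G.degIn (Ei i) v = G.degree v := by
        unfold Multigraph.degree Multigraph.degIn
        rw [h1, h2]
      rw [this]; exact hleaf v
    · -- v = x
      rw [Set.mem_singleton_iff] at hv
      rw [hv]
      obtain ⟨v0, hv0x, hU⟩ := hcomp i
      have hv0 : v0 ∈ U i := by rw [hU]; exact ⟨hv0x, Relation.ReflTransGen.refl⟩
      have hwx : Relation.ReflTransGen (G.AdjOff ∅) v0 x :=
        Relation.ReflTransGen.mono
          (fun a b ⟨e, he⟩ => ⟨e, Set.notMem_empty e, he⟩) v0 x (hconn.2 v0 x)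
      obtain ⟨e1, -, w1, hw1, hends1⟩ := hwalk i ∅ v0 hwx hv0
      have hnb := hbridgeless e1
      unfold Multigraph.IsBridge at hnb
      push_neg at hnb
      have hrt : Relation.ReflTransGen (G.AdjOff {e1}) w1 x := hnb w1 x hends1
      obtain ⟨e2, he2, w2, hw2, hends2⟩ := hwalk i {e1} w1 hrt hw1
      have hne : e1 ≠ e2 := fun h => he2 (by rw [← h]; exact Set.mem_singleton e1)
      have hsub : ({e1, e2} : Set E) ⊆ {e ∈ Ei i | x ∈ G.ends e} := by
        rintro e (rfl | rfl)
        · exact ⟨Or.inl ⟨w1, hw1, by rw [hends1]; exact Sym2.mem_mk_left w1 x⟩,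
            by rw [hends1]; exact Sym2.mem_mk_right w1 x⟩
        · exact ⟨Or.inl ⟨w2, hw2, by rw [hends2]; exact Sym2.mem_mk_left w2 x⟩,
            by rw [hends2]; exact Sym2.mem_mk_right w2 x⟩
      have h2le : 2 ≤ {e ∈ Ei i | x ∈ G.ends e}.ncard := by
        calc 2 = ({e1, e2} : Set E).ncard := (Set.ncard_pair hne).symm
          _ ≤ _ := Set.ncard_le_ncard hsub (Set.toFinite _)
      unfold Multigraph.degIn
      omega
  -- lower bound on edge counts
  have hF1 : ∀ i, (U i).ncard + 1 ≤ (Ei i).ncard := by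
    intro i
    have hsum := sum_degIn_eq' G (Ei i)
    have hle : 2 * ((U i).ncard + 1) ≤ ∑ v : V, G.degIn (Ei i) v := by
      have hcard : ((Set.toFinite (U i ∪ {x} : Set V)).toFinset).card
          = (U i).ncard + 1 := by
        rw [← Set.ncard_eq_toFinset_card _ (Set.toFinite _), hVi i]
      calc 2 * ((U i).ncard + 1)
          = ∑ _v ∈ (Set.toFinite (U i ∪ {x} : Set V)).toFinset, 2 := by
            rw [Finset.sum_const, smul_eq_mul, hcard, mul_comm]
        _ ≤ ∑ v ∈ (Set.toFinite (U i ∪ {x} : Set V)).toFinset, G.degIn (Ei i) v :=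
            Finset.sum_le_sum fun v hv =>
              hleafi i v ((Set.Finite.mem_toFinset _).mp hv)
        _ ≤ ∑ v : V, G.degIn (Ei i) v :=
            Finset.sum_le_sum_of_subset (Finset.subset_univ _)
    omega
  -- assemble
  refine ⟨fun i => (Ei i).ncard - (U i).ncard, ?_, ?_, ?_, hleafi⟩
  · intro i
    show (Ei i).ncard + 1 = (U i ∪ {x} : Set V).ncard + ((Ei i).ncard - (U i).ncard)
    have h1 := hF1 i
    have h2 := hVi i
    omega
  · intro i
    show 1 ≤ (Ei i).ncard - (U i).ncard
    have h1 := hF1 i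
    omega
  · show (∑ i, ((Ei i).ncard - (U i).ncard)) = g
    have hsum : (∑ i, ((Ei i).ncard - (U i).ncard)) + ∑ i, (U i).ncard
        = ∑ i, (Ei i).ncard := by
      rw [← Finset.sum_add_distrib]
      exact Finset.sum_congr rfl fun i _ => by have := hF1 i; omega
    omega
end
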